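/- arXiv:1910.01322 — 7 statements merged into one kernel-verified Lean document; each statement's English description precedes it below -/
import Mathlib

section
/- Let n, k, r be integers with r ≥ 2, ⌊(k-1)/2⌋ ≥ r−1, and n ≥ k. Then the r-graph H_{n,k} is connected, contains no Berge-path of length k (every Berge-path in H_{n,k} has length at most k−1), and has exactly C(⌊(k-1)/2⌋, r-1)·(n − ⌊(k-1)/2⌋) + C(⌊(k-1)/2⌋, r) + [k even]·C(⌊(k-1)/2⌋, r-2) hyperedges. -/
open scoped Classical

/-- A Berge-path of length `t` in the hypergraph `H` (a family of hyperedges):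
an alternating sequence of `t+1` distinct vertices and `t` distinct hyperedges
`v₁, e₁, …, e_t, v_{t+1}` with `vᵢ, vᵢ₊₁ ∈ eᵢ`. -/
structure BergePath {V : Type*} (H : Finset (Finset V)) (t : ℕ) where
  verts : Fin (t + 1) → V
  edges : Fin t → Finset V
  verts_inj : Function.Injective verts
  edges_inj : Function.Injective edges
  edges_mem : ∀ i, edges i ∈ H
  fst_mem : ∀ i : Fin t, verts i.castSucc ∈ edges i
  snd_mem : ∀ i : Fin t, verts i.succ ∈ edges i

/-- A Berge-cycle of length `t` in the hypergraph `H`: `t` distinct vertices and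
`t` distinct hyperedges with `vᵢ, vᵢ₊₁ ∈ eᵢ`, indices mod `t`. -/
structure BergeCycle {V : Type*} (H : Finset (Finset V)) (t : ℕ) where
  verts : Fin t → V
  edges : Fin t → Finset V
  verts_inj : Function.Injective verts
  edges_inj : Function.Injective edges
  edges_mem : ∀ i, edges i ∈ H
  fst_mem : ∀ i, verts i ∈ edges i
  snd_mem : ∀ i : Fin t, verts ⟨(i.val + 1) % t, Nat.mod_lt _ i.pos⟩ ∈ edges i

/-- `u` and `v` are joined by a Berge-path of `H`. -/
def BergeReachable {V : Type*} (H : Finset (Finset V)) (u v : V) : Prop :=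
  ∃ t, ∃ P : BergePath H t, P.verts 0 = u ∧ P.verts (Fin.last t) = v

/-- A hypergraph on the vertex type `V` is connected if any two vertices are joined
by a Berge-path. -/
def HConnected {V : Type*} (H : Finset (Finset V)) : Prop :=
  ∀ u v : V, u ≠ v → BergeReachable H u v

/-- The degree of a vertex: the number of hyperedges containing it. -/
noncomputable def hdeg {V : Type*} (H : Finset (Finset V)) (v : V) : ℕ :=
  (H.filter (fun e => v ∈ e)).card

/-- The vertex neighborhood of `v` in `H`. -/
noncomputable def nbhd {V : Type*} [Fintype V] (H : Finset (Finset V)) (v : V) : Finset V :=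
  Finset.univ.filter (fun u => u ≠ v ∧ ∃ e ∈ H, v ∈ e ∧ u ∈ e)

/-- The sub-hypergraph induced by a set `S` of vertices: all hyperedges lying inside `S`. -/
noncomputable def restrictTo {V : Type*} (H : Finset (Finset V)) (S : Finset V) :
    Finset (Finset V) :=
  H.filter (fun e => e ⊆ S)

/-- `DelProcess H D S T` : starting from the vertex set `S`, the vertex set `T` can be
reached by repeatedly deleting a vertex whose degree in the current induced
sub-hypergraph is less than `D` (together with all hyperedges containing it). -/
inductive DelProcess {V : Type*} (H : Finset (Finset V)) (D : ℕ) :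
    Finset V → Finset V → Prop
  | refl (S : Finset V) : DelProcess H D S S
  | step (S T : Finset V) (v : V) (hv : v ∈ S)
      (hd : hdeg (restrictTo H S) v < D)
      (h : DelProcess H D (S.erase v) T) : DelProcess H D S T

/-- The edge family of `H_{n,k}` for odd `k`, on vertex set `S` with kernel `A`:
all `r`-subsets of `S` having at most one vertex outside `A`. -/
noncomputable def HnkFamilyOdd {V : Type*} (r : ℕ) (S A : Finset V) : Finset (Finset V) :=
  S.powerset.filter (fun s => s.card = r ∧ (s \ A).card ≤ 1)

/-- The edge family of `H_{n,k}` for even `k`: additionally all `r`-subsets consisting of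
`b1`, `b2` and `r-2` vertices of `A`. -/
noncomputable def HnkFamilyEven {V : Type*} (r : ℕ) (S A : Finset V) (b1 b2 : V) :
    Finset (Finset V) :=
  S.powerset.filter (fun s => s.card = r ∧ ((s \ A).card ≤ 1 ∨ s \ A = {b1, b2}))

/-- `H` is (a copy of) the extremal hypergraph `H_{m,k}` on the vertex set `S`
(where `m = |S|`). Note that `⌊(k-1)/2⌋` equals `(k-1)/2` in ℕ for odd `k`,
and `(k-2)/2` for even `k`. -/
def IsHnkOn {V : Type*} (r k : ℕ) (S : Finset V) (H : Finset (Finset V)) : Prop :=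
  ∃ A ⊆ S, A.card = (k - 1) / 2 ∧
    ((Odd k ∧ H = HnkFamilyOdd r S A) ∨
     (Even k ∧ ∃ b1 ∈ S \ A, ∃ b2 ∈ S \ A, b1 ≠ b2 ∧ H = HnkFamilyEven r S A b1 b2))

/-- The extremal number of hyperedges:
`C(⌊(k-1)/2⌋, r-1)·(n − ⌊(k-1)/2⌋) + C(⌊(k-1)/2⌋, r) + [2 ∣ k]·C(⌊(k-1)/2⌋, r-2)`. -/
def extremalCount (r k n : ℕ) : ℕ :=
  ((k - 1) / 2).choose (r - 1) * (n - (k - 1) / 2) + ((k - 1) / 2).choose r +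
    (if 2 ∣ k then ((k - 1) / 2).choose (r - 2) else 0)

/-- The threshold `N_{k,r}`. -/
def Nkr (r k : ℕ) : ℕ :=
  (r * (k - 1)).choose r + ((k - 1) / 2).choose (r - 1) * ((k - 1) / 2)
    - ((k - 1) / 2).choose r - (if 2 ∣ k then ((k - 1) / 2).choose (r - 2) else 0)
    + r * (k - 1)

section Aux

lemma reach1 {V : Type*} {H : Finset (Finset V)} {e : Finset V} (he : e ∈ H)
    {u v : V} (hu : u ∈ e) (hv : v ∈ e) (huv : u ≠ v) : BergeReachable H u v := by
  refine ⟨1, ⟨![u, v], ![e], ?_, ?_, ?_, ?_, ?_⟩, ?_, ?_⟩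
  · intro i j hij
    fin_cases i <;> fin_cases j <;> simp_all
  · intro i j _; exact Subsingleton.elim i j
  · intro i; fin_cases i; simpa using he
  · intro i; fin_cases i; simpa using hu
  · intro i; fin_cases i; simpa using hv
  · rfl
  · rfl

lemma reach2 {V : Type*} {H : Finset (Finset V)} {e1 e2 : Finset V}
    (h1 : e1 ∈ H) (h2 : e2 ∈ H) (hne : e1 ≠ e2) {u w v : V}
    (hu : u ∈ e1) (hw1 : w ∈ e1) (hw2 : w ∈ e2) (hv : v ∈ e2)
    (huw : u ≠ w) (hvw : v ≠ w) (huv : u ≠ v) : BergeReachable H u v := by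
  refine ⟨2, ⟨![u, w, v], ![e1, e2], ?_, ?_, ?_, ?_, ?_⟩, ?_, ?_⟩
  · intro i j hij
    fin_cases i <;> fin_cases j <;> simp_all
  · intro i j hij
    fin_cases i <;> fin_cases j <;> simp_all [hne, hne.symm]
  · intro i; fin_cases i <;> simp_all
  · intro i; fin_cases i <;> simp_all
  · intro i; fin_cases i <;> simp_all
  · rfl
  · rfl

lemma path_bound {V : Type*} [DecidableEq V] {H : Finset (Finset V)} {t : ℕ}
    (P : BergePath H t) (A : Finset V) (s0 : ℕ)
    (hBB : ((Finset.univ : Finset (Fin t)).filter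
      (fun i => P.verts i.castSucc ∉ A ∧ P.verts i.succ ∉ A)).card ≤ s0) :
    t + 1 ≤ 2 * A.card + 1 + s0 := by
  classical
  set f := P.verts with hf
  set Av := (Finset.univ : Finset (Fin (t+1))).filter (fun i => f i ∈ A) with hAv
  set Bv := (Finset.univ : Finset (Fin (t+1))).filter (fun i => f i ∉ A) with hBv
  have hsplit : Av.card + Bv.card = t + 1 := by
    simpa using Finset.card_filter_add_card_filter_not
      (s := (Finset.univ : Finset (Fin (t+1)))) (p := fun i => f i ∈ A)
  have hAvle : Av.card ≤ A.card := by
    apply Finset.card_le_card_of_injOn f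
    · intro i hi; simp [hAv] at hi; exact hi
    · exact P.verts_inj.injOn
  set BB := (Finset.univ : Finset (Fin t)).filter
      (fun i => f i.castSucc ∉ A ∧ f i.succ ∉ A) with hBBdef
  set Good := Bv.filter (fun j => j ≠ Fin.last t ∧ f (j+1) ∈ A) with hGood
  have hsub : Bv ⊆ Good ∪ ({Fin.last t} ∪ BB.image Fin.castSucc) := by
    intro j hj
    by_cases h1 : j = Fin.last t
    · exact Finset.mem_union_right _ (Finset.mem_union_left _ (by simp [h1]))
    by_cases h2 : f (j+1) ∈ A
    · exact Finset.mem_union_left _ (by simp [hGood, hj, h1, h2])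
    · apply Finset.mem_union_right _ (Finset.mem_union_right _ ?_)
      have hjlt : j.val < t := Fin.val_lt_last h1
      refine Finset.mem_image.2 ⟨⟨j.val, hjlt⟩, ?_, ?_⟩
      · have e1 : Fin.castSucc ⟨j.val, hjlt⟩ = j := by ext; simp
        have e2 : Fin.succ ⟨j.val, hjlt⟩ = j + 1 := by
          ext; simp [Fin.val_add_one_of_lt (Fin.lt_last_iff_ne_last.2 h1)]
        simp only [hBBdef, Finset.mem_filter, Finset.mem_univ, true_and, e1, e2]
        simp [hBv] at hj
        exact ⟨hj, h2⟩
      · ext; simp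
  have hcard1 : Bv.card ≤ Good.card + (1 + BB.card) := by
    calc Bv.card ≤ (Good ∪ ({Fin.last t} ∪ BB.image Fin.castSucc)).card :=
          Finset.card_le_card hsub
    _ ≤ Good.card + ({Fin.last t} ∪ BB.image Fin.castSucc).card := Finset.card_union_le _ _
    _ ≤ Good.card + (({Fin.last t} : Finset (Fin (t+1))).card + (BB.image Fin.castSucc).card) := by
        exact Nat.add_le_add_left (Finset.card_union_le _ _) _
    _ ≤ Good.card + (1 + BB.card) := by
        have := Finset.card_image_le (s := BB) (f := Fin.castSucc)
        simp only [Finset.card_singleton]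
        omega
  have hGoodle : Good.card ≤ Av.card := by
    apply Finset.card_le_card_of_injOn (fun j => j + 1)
    · intro j hj
      simp [hGood] at hj
      simp [hAv, hj.2.2]
    · intro a _ b _ h
      exact add_right_cancel h
  omega

lemma insert_sdiff_singleton {V : Type*} {A A' : Finset V} {b : V}
    (hA' : A' ⊆ A) (hb : b ∉ A) : insert b A' \ A = {b} := by
  ext x
  simp only [Finset.mem_sdiff, Finset.mem_insert, Finset.mem_singleton]
  constructor
  · rintro ⟨hx | hx, hxA⟩
    · exact hx
    · exact absurd (hA' hx) hxA
  · rintro rfl; exact ⟨Or.inl rfl, hb⟩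

lemma HnkFamilyOdd_eq {V : Type*} (r : ℕ) (hr : 1 ≤ r) (S A : Finset V)
    (hA : A ⊆ S) :
    HnkFamilyOdd r S A = A.powersetCard r ∪
      (S \ A).biUnion (fun b => (A.powersetCard (r-1)).image (insert b)) := by
  ext s
  simp only [HnkFamilyOdd, Finset.mem_filter, Finset.mem_powerset, Finset.mem_union,
    Finset.mem_biUnion, Finset.mem_image, Finset.mem_powersetCard, Finset.mem_sdiff]
  constructor
  · rintro ⟨hsS, hcard, hle⟩
    by_cases h0 : (s \ A).card = 0
    · exact Or.inl ⟨Finset.sdiff_eq_empty_iff_subset.1 (Finset.card_eq_zero.1 h0), hcard⟩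
    · right
      have h1 : (s \ A).card = 1 := by omega
      obtain ⟨b, hb⟩ := Finset.card_eq_one.1 h1
      have hbs : b ∈ s \ A := hb ▸ Finset.mem_singleton_self b
      rw [Finset.mem_sdiff] at hbs
      have hic : (s ∩ A).card = r - 1 := by
        have := Finset.card_sdiff_add_card_inter s A
        omega
      refine ⟨b, ⟨hsS hbs.1, hbs.2⟩, s ∩ A, ⟨Finset.inter_subset_right, hic⟩, ?_⟩
      have := Finset.sdiff_union_inter s A
      rw [hb] at this
      rw [Finset.insert_eq]; exact this
  · rintro (⟨hsub, hcard⟩ | ⟨b, ⟨hbS, hbA⟩, A', ⟨hA'sub, hA'card⟩, rfl⟩)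
    · exact ⟨hsub.trans hA, hcard, by simp [Finset.sdiff_eq_empty_iff_subset.2 hsub]⟩
    · have hbA' : b ∉ A' := fun h => hbA (hA'sub h)
      refine ⟨Finset.insert_subset hbS (hA'sub.trans hA), ?_, ?_⟩
      · rw [Finset.card_insert_of_notMem hbA', hA'card]; omega
      · rw [insert_sdiff_singleton hA'sub hbA]; simp

lemma card_HnkFamilyOdd {V : Type*} (r : ℕ) (hr : 1 ≤ r) (S A : Finset V)
    (hA : A ⊆ S) :
    (HnkFamilyOdd r S A).card = A.card.choose r + A.card.choose (r-1) * (S.card - A.card) := by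
  rw [HnkFamilyOdd_eq r hr S A hA, ← Finset.card_sdiff_of_subset hA]
  have himgcard : ∀ b ∉ A, ((A.powersetCard (r-1)).image (insert b)).card
      = A.card.choose (r-1) := by
    intro b hb
    rw [Finset.card_image_of_injOn, Finset.card_powersetCard]
    intro x hx y hy hxy
    simp only [Finset.mem_coe, Finset.mem_powersetCard] at hx hy
    have hbx : b ∉ x := fun h => hb (hx.1 h)
    have hby : b ∉ y := fun h => hb (hy.1 h)
    rw [← Finset.erase_insert hbx, ← Finset.erase_insert hby, hxy]
  have hpair : ∀ b ∈ S \ A, ∀ b' ∈ S \ A, b ≠ b' →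
      Disjoint ((A.powersetCard (r-1)).image (insert b))
        ((A.powersetCard (r-1)).image (insert b')) := by
    intro b hb b' hb' hne
    rw [Finset.mem_sdiff] at hb hb'
    rw [Finset.disjoint_left]
    rintro s hs hs'
    obtain ⟨x, hx, rfl⟩ := Finset.mem_image.1 hs
    obtain ⟨y, hy, heq⟩ := Finset.mem_image.1 hs'
    rw [Finset.mem_powersetCard] at hx hy
    have : b ∈ insert b' y := heq ▸ Finset.mem_insert_self b x
    rcases Finset.mem_insert.1 this with h | h
    · exact hne h
    · exact hb.2 (hy.1 h)
  have hdisj : Disjoint (A.powersetCard r)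
      ((S \ A).biUnion (fun b => (A.powersetCard (r-1)).image (insert b))) := by
    rw [Finset.disjoint_left]
    intro s hs hs'
    obtain ⟨b, hb, hsb⟩ := Finset.mem_biUnion.1 hs'
    obtain ⟨x, hx, rfl⟩ := Finset.mem_image.1 hsb
    rw [Finset.mem_powersetCard] at hs
    rw [Finset.mem_sdiff] at hb
    exact hb.2 (hs.1 (Finset.mem_insert_self b x))
  rw [Finset.card_union_of_disjoint hdisj, Finset.card_biUnion hpair,
    Finset.card_powersetCard]
  congr 1
  rw [Finset.sum_congr rfl (fun b hb => himgcard b (Finset.mem_sdiff.1 hb).2)]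
  rw [Finset.sum_const, smul_eq_mul, mul_comm]

lemma inter_A_eq {V : Type*} {A A' : Finset V} {b1 b2 : V}
    (hA' : A' ⊆ A) (h1 : b1 ∉ A) (h2 : b2 ∉ A) :
    (insert b1 (insert b2 A')) ∩ A = A' := by
  ext x
  simp only [Finset.mem_inter, Finset.mem_insert]
  constructor
  · rintro ⟨rfl | rfl | hx, hxA⟩
    · exact absurd hxA h1
    · exact absurd hxA h2
    · exact hx
  · intro hx; exact ⟨Or.inr (Or.inr hx), hA' hx⟩

lemma special_sdiff {V : Type*} {A A' : Finset V} {b1 b2 : V}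
    (hA' : A' ⊆ A) (h1 : b1 ∉ A) (h2 : b2 ∉ A) :
    (insert b1 (insert b2 A')) \ A = {b1, b2} := by
  ext x
  simp only [Finset.mem_sdiff, Finset.mem_insert, Finset.mem_singleton]
  constructor
  · rintro ⟨rfl | rfl | hx, hxA⟩
    · exact Or.inl rfl
    · exact Or.inr rfl
    · exact absurd (hA' hx) hxA
  · rintro (rfl | rfl)
    · exact ⟨Or.inl rfl, h1⟩
    · exact ⟨Or.inr (Or.inl rfl), h2⟩

lemma HnkFamilyEven_eq {V : Type*} (r : ℕ) (hr : 2 ≤ r) (S A : Finset V)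
    (hA : A ⊆ S) {b1 b2 : V} (hb1 : b1 ∈ S \ A) (hb2 : b2 ∈ S \ A) (hb : b1 ≠ b2) :
    HnkFamilyEven r S A b1 b2 = HnkFamilyOdd r S A ∪
      (A.powersetCard (r-2)).image (fun A' => insert b1 (insert b2 A')) := by
  rw [Finset.mem_sdiff] at hb1 hb2
  ext s
  simp only [HnkFamilyEven, HnkFamilyOdd, Finset.mem_filter, Finset.mem_powerset,
    Finset.mem_union, Finset.mem_image, Finset.mem_powersetCard]
  constructor
  · rintro ⟨hsS, hcard, hle | hsp⟩
    · exact Or.inl ⟨hsS, hcard, hle⟩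
    · right
      refine ⟨s ∩ A, ⟨Finset.inter_subset_right, ?_⟩, ?_⟩
      · have h2 : (s \ A).card = 2 := by rw [hsp]; exact Finset.card_pair hb
        have := Finset.card_sdiff_add_card_inter s A
        omega
      · have hsu := Finset.sdiff_union_inter s A
        rw [hsp] at hsu
        conv_rhs => rw [← hsu]
        ext x; simp only [Finset.mem_insert, Finset.mem_union, Finset.mem_singleton, Finset.mem_inter]; tauto
  · rintro (⟨hsS, hcard, hle⟩ | ⟨A', ⟨hA'sub, hA'card⟩, rfl⟩)
    · exact ⟨hsS, hcard, Or.inl hle⟩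
    · have hb2A' : b2 ∉ A' := fun h => hb2.2 (hA'sub h)
      have hb1i : b1 ∉ insert b2 A' := by
        simp only [Finset.mem_insert]
        rintro (rfl | h)
        · exact hb rfl
        · exact hb1.2 (hA'sub h)
      refine ⟨?_, ?_, Or.inr (special_sdiff hA'sub hb1.2 hb2.2)⟩
      · exact Finset.insert_subset hb1.1 (Finset.insert_subset hb2.1 (hA'sub.trans hA))
      · rw [Finset.card_insert_of_notMem hb1i, Finset.card_insert_of_notMem hb2A',
          hA'card]
        omega

lemma card_HnkFamilyEven {V : Type*} (r : ℕ) (hr : 2 ≤ r) (S A : Finset V)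
    (hA : A ⊆ S) {b1 b2 : V} (hb1 : b1 ∈ S \ A) (hb2 : b2 ∈ S \ A) (hb : b1 ≠ b2) :
    (HnkFamilyEven r S A b1 b2).card =
      A.card.choose r + A.card.choose (r-1) * (S.card - A.card) + A.card.choose (r-2) := by
  rw [HnkFamilyEven_eq r hr S A hA hb1 hb2 hb]
  rw [Finset.mem_sdiff] at hb1 hb2
  have hdisj : Disjoint (HnkFamilyOdd r S A)
      ((A.powersetCard (r-2)).image (fun A' => insert b1 (insert b2 A'))) := by
    rw [Finset.disjoint_left]
    intro s hs hs'
    obtain ⟨A', hA', rfl⟩ := Finset.mem_image.1 hs'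
    rw [Finset.mem_powersetCard] at hA'
    simp only [HnkFamilyOdd, Finset.mem_filter] at hs
    have := hs.2.2
    rw [special_sdiff hA'.1 hb1.2 hb2.2, Finset.card_pair hb] at this
    omega
  rw [Finset.card_union_of_disjoint hdisj, card_HnkFamilyOdd r (by omega) S A hA]
  congr 1
  rw [Finset.card_image_of_injOn, Finset.card_powersetCard]
  intro x hx y hy hxy
  simp only [Finset.mem_coe, Finset.mem_powersetCard] at hx hy
  have := congrArg (fun s => s ∩ A) hxy
  simpa [inter_A_eq hx.1 hb1.2 hb2.2, inter_A_eq hy.1 hb1.2 hb2.2] using this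

lemma mem_HnkFamilyOdd_of_subset {V : Type*} {r : ℕ} {S A e : Finset V}
    (hA : A ⊆ S) (he : e ⊆ A) (hc : e.card = r) : e ∈ HnkFamilyOdd r S A := by
  simp only [HnkFamilyOdd, Finset.mem_filter, Finset.mem_powerset]
  exact ⟨he.trans hA, hc, by simp [Finset.sdiff_eq_empty_iff_subset.2 he]⟩

lemma insert_mem_HnkFamilyOdd {V : Type*} {r : ℕ} {S A A' : Finset V} {b : V}
    (hA : A ⊆ S) (hbS : b ∈ S) (hbA : b ∉ A) (hA' : A' ⊆ A) (hc : A'.card = r - 1)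
    (hr : 1 ≤ r) : insert b A' ∈ HnkFamilyOdd r S A := by
  simp only [HnkFamilyOdd, Finset.mem_filter, Finset.mem_powerset]
  have hbA' : b ∉ A' := fun h => hbA (hA' h)
  refine ⟨Finset.insert_subset hbS (hA'.trans hA), ?_, ?_⟩
  · rw [Finset.card_insert_of_notMem hbA', hc]; omega
  · rw [insert_sdiff_singleton hA' hbA]; simp

lemma odd_subset_even {V : Type*} (r : ℕ) (S A : Finset V) (b1 b2 : V) :
    HnkFamilyOdd r S A ⊆ HnkFamilyEven r S A b1 b2 := by
  intro s
  simp only [HnkFamilyOdd, HnkFamilyEven, Finset.mem_filter]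
  tauto

lemma odd_no_two {V : Type*} {r : ℕ} {S A e : Finset V}
    (he : e ∈ HnkFamilyOdd r S A) {x y : V} (hx : x ∈ e) (hy : y ∈ e)
    (hxy : x ≠ y) (hxA : x ∉ A) : y ∈ A := by
  by_contra hyA
  have hsub : ({x, y} : Finset V) ⊆ e \ A := by
    intro z hz
    rw [Finset.mem_insert, Finset.mem_singleton] at hz
    rcases hz with rfl | rfl
    · exact Finset.mem_sdiff.2 ⟨hx, hxA⟩
    · exact Finset.mem_sdiff.2 ⟨hy, hyA⟩
  have h2 := Finset.card_le_card hsub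
  rw [Finset.card_pair hxy] at h2
  simp only [HnkFamilyOdd, Finset.mem_filter] at he
  omega

lemma even_pair {V : Type*} {r : ℕ} {S A e : Finset V} {b1 b2 : V}
    (he : e ∈ HnkFamilyEven r S A b1 b2) {x y : V} (hx : x ∈ e) (hy : y ∈ e)
    (hxy : x ≠ y) (hxA : x ∉ A) (hyA : y ∉ A) :
    (x = b1 ∨ x = b2) ∧ (y = b1 ∨ y = b2) := by
  have hxs : x ∈ e \ A := Finset.mem_sdiff.2 ⟨hx, hxA⟩
  have hys : y ∈ e \ A := Finset.mem_sdiff.2 ⟨hy, hyA⟩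
  simp only [HnkFamilyEven, Finset.mem_filter] at he
  rcases he.2.2 with hle | hsp
  · exfalso
    have hsub : ({x, y} : Finset V) ⊆ e \ A := by
      intro z hz
      rw [Finset.mem_insert, Finset.mem_singleton] at hz
      rcases hz with rfl | rfl
      · exact hxs
      · exact hys
    have h2 := Finset.card_le_card hsub
    rw [Finset.card_pair hxy] at h2
    omega
  · rw [hsp] at hxs hys
    rw [Finset.mem_insert, Finset.mem_singleton] at hxs hys
    exact ⟨hxs, hys⟩

lemma bound_odd {V : Type*} [DecidableEq V] {H : Finset (Finset V)} {A : Finset V} {t : ℕ}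
    (hedge : ∀ e ∈ H, ∀ x ∈ e, ∀ y ∈ e, x ≠ y → x ∉ A → y ∈ A)
    (P : BergePath H t) : t + 1 ≤ 2 * A.card + 1 := by
  have h := path_bound P A 0 ?_
  · omega
  · rw [Nat.le_zero, Finset.card_eq_zero, Finset.filter_eq_empty_iff]
    rintro i - ⟨h1, h2⟩
    have hne : P.verts i.castSucc ≠ P.verts i.succ :=
      fun h => (Fin.castSucc_lt_succ : i.castSucc < i.succ).ne (P.verts_inj h)
    exact h2 (hedge _ (P.edges_mem i) _ (P.fst_mem i) _ (P.snd_mem i) hne h1)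

lemma bound_even {V : Type*} [DecidableEq V] {H : Finset (Finset V)} {A : Finset V}
    {b1 b2 : V} {t : ℕ}
    (hedge : ∀ e ∈ H, ∀ x ∈ e, ∀ y ∈ e, x ≠ y → x ∉ A → y ∉ A →
      (x = b1 ∨ x = b2) ∧ (y = b1 ∨ y = b2))
    (P : BergePath H t) : t + 1 ≤ 2 * A.card + 2 := by
  have h := path_bound P A 1 ?_
  · omega
  set BB := (Finset.univ : Finset (Fin t)).filter
      (fun i => P.verts i.castSucc ∉ A ∧ P.verts i.succ ∉ A) with hBBdef
  have key : ∀ i ∈ BB, ∀ i' ∈ BB, i < i' → False := by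
    intro i hi i' hi' hlt
    simp only [hBBdef, Finset.mem_filter, Finset.mem_univ, true_and] at hi hi'
    have hne1 : P.verts i.castSucc ≠ P.verts i.succ :=
      fun h => (Fin.castSucc_lt_succ : i.castSucc < i.succ).ne (P.verts_inj h)
    have hne2 : P.verts i'.castSucc ≠ P.verts i'.succ :=
      fun h => (Fin.castSucc_lt_succ : i'.castSucc < i'.succ).ne (P.verts_inj h)
    obtain ⟨hx, hy⟩ := hedge _ (P.edges_mem i) _ (P.fst_mem i) _ (P.snd_mem i) hne1 hi.1 hi.2
    obtain ⟨-, hz⟩ := hedge _ (P.edges_mem i') _ (P.fst_mem i') _ (P.snd_mem i') hne2 hi'.1 hi'.2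
    have hd1 : P.verts i.castSucc ≠ P.verts i'.succ := by
      intro h
      have := P.verts_inj h
      have h1 : (i.castSucc : ℕ) = (i'.succ : ℕ) := congrArg Fin.val this
      simp only [Fin.coe_castSucc, Fin.val_succ] at h1
      omega
    have hd2 : P.verts i.succ ≠ P.verts i'.succ := by
      intro h
      have := P.verts_inj h
      have h1 : (i.succ : ℕ) = (i'.succ : ℕ) := congrArg Fin.val this
      simp only [Fin.val_succ] at h1
      have : (i : ℕ) < (i' : ℕ) := hlt
      omega
    rcases hx with rfl | rfl <;> rcases hy with h | h <;> rcases hz with h' | h' <;>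
      simp_all
  apply Finset.card_le_one.2
  intro i hi i' hi'
  by_contra hne
  rcases lt_or_gt_of_ne hne with hlt | hlt
  · exact key i hi i' hi' hlt
  · exact key i' hi' i hi hlt

lemma Hnk_connected {V : Type*} [Fintype V] {r : ℕ}
    {H : Finset (Finset V)} {A : Finset V}
    (hmem : ∀ s, s ∈ HnkFamilyOdd r Finset.univ A → s ∈ H)
    (hr : 2 ≤ r) (hAr : r - 1 ≤ A.card) (hB : ∃ b, b ∉ A) :
    HConnected H := by
  intro u v huv
  have h1r : (1 : ℕ) ≤ r - 1 := by omega
  by_cases hu : u ∈ A <;> by_cases hv : v ∈ A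
  · -- both in A
    by_cases hAr2 : r ≤ A.card
    · obtain ⟨e, he1, he2, he3⟩ := Finset.exists_subsuperset_card_eq
        (show ({u, v} : Finset V) ⊆ A from
          Finset.insert_subset hu (Finset.singleton_subset_iff.2 hv))
        (by rw [Finset.card_pair huv]; exact hr) hAr2
      exact reach1 (hmem e (mem_HnkFamilyOdd_of_subset (Finset.subset_univ A) he2 he3))
        (he1 (by simp)) (he1 (by simp)) huv
    · have hAeq : A.card = r - 1 := by omega
      obtain ⟨b, hb⟩ := hB
      have he : insert b A ∈ H := hmem _ (insert_mem_HnkFamilyOdd (Finset.subset_univ A)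
        (Finset.mem_univ b) hb (subset_refl A) hAeq (by omega))
      exact reach1 he (Finset.mem_insert_of_mem hu) (Finset.mem_insert_of_mem hv) huv
  · -- u ∈ A, v ∉ A
    obtain ⟨A', h1, h2, h3⟩ := Finset.exists_subsuperset_card_eq
      (Finset.singleton_subset_iff.2 hu) (by simpa using h1r) hAr
    have he : insert v A' ∈ H := hmem _ (insert_mem_HnkFamilyOdd (Finset.subset_univ A)
      (Finset.mem_univ v) hv h2 h3 (by omega))
    exact reach1 he (Finset.mem_insert_of_mem (h1 (Finset.mem_singleton_self u)))
      (Finset.mem_insert_self v A') huv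
  · -- u ∉ A, v ∈ A
    obtain ⟨A', h1, h2, h3⟩ := Finset.exists_subsuperset_card_eq
      (Finset.singleton_subset_iff.2 hv) (by simpa using h1r) hAr
    have he : insert u A' ∈ H := hmem _ (insert_mem_HnkFamilyOdd (Finset.subset_univ A)
      (Finset.mem_univ u) hu h2 h3 (by omega))
    exact reach1 he (Finset.mem_insert_self u A')
      (Finset.mem_insert_of_mem (h1 (Finset.mem_singleton_self v))) huv
  · -- u ∉ A, v ∉ A
    obtain ⟨A', hA'1, hA'2⟩ := Finset.exists_subset_card_eq hAr
    have hA'ne : A'.Nonempty := Finset.card_pos.1 (by omega)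
    obtain ⟨w, hw⟩ := hA'ne
    have he1 : insert u A' ∈ H := hmem _ (insert_mem_HnkFamilyOdd (Finset.subset_univ A)
      (Finset.mem_univ u) hu hA'1 hA'2 (by omega))
    have he2 : insert v A' ∈ H := hmem _ (insert_mem_HnkFamilyOdd (Finset.subset_univ A)
      (Finset.mem_univ v) hv hA'1 hA'2 (by omega))
    have hne : insert u A' ≠ insert v A' := by
      intro h
      have : u ∈ insert v A' := h ▸ Finset.mem_insert_self u A'
      rcases Finset.mem_insert.1 this with h' | h'
      · exact huv h'
      · exact hu (hA'1 h')
    exact reach2 he1 he2 hne (Finset.mem_insert_self u A') (Finset.mem_insert_of_mem hw)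
      (Finset.mem_insert_of_mem hw) (Finset.mem_insert_self v A')
      (fun h => hu (hA'1 (h ▸ hw))) (fun h => hv (hA'1 (h ▸ hw))) huv

end Aux

/-- For `r ≥ 2`, `⌊(k-1)/2⌋ ≥ r−1` and `n ≥ k`, the hypergraph `H_{n,k}`
exists, is connected, contains no Berge-path of length `k` (every Berge-path has length at
most `k−1`), and has exactly the extremal number of hyperedges. -/
theorem Hnk_properties (n r k : ℕ) (hr : 2 ≤ r) (hrk : r - 1 ≤ (k - 1) / 2) (hnk : k ≤ n) :
    (∃ H : Finset (Finset (Fin n)), IsHnkOn r k (Finset.univ : Finset (Fin n)) H) ∧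
    ∀ H : Finset (Finset (Fin n)), IsHnkOn r k (Finset.univ : Finset (Fin n)) H →
      HConnected H ∧ IsEmpty (BergePath H k) ∧
      (∀ t, Nonempty (BergePath H t) → t ≤ k - 1) ∧
      H.card = extremalCount r k n := by
  have hk3 : 3 ≤ k := by omega
  constructor
  · -- existence
    obtain ⟨A, hAsub, hAcard⟩ := Finset.exists_subset_card_eq
      (show (k-1)/2 ≤ (Finset.univ : Finset (Fin n)).card by
        rw [Finset.card_univ, Fintype.card_fin]; omega)
    rcases Nat.even_or_odd k with hke | hko
    · have hBc : 1 < (Finset.univ \ A).card := by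
        rw [Finset.card_sdiff_of_subset hAsub, hAcard, Finset.card_univ, Fintype.card_fin]
        obtain ⟨m, hm⟩ := hke
        omega
      obtain ⟨b1, hb1, b2, hb2, hne⟩ := Finset.one_lt_card.1 hBc
      rw [Finset.mem_sdiff] at hb1 hb2
      refine ⟨_, A, hAsub, hAcard, Or.inr ⟨hke, b1, ?_, b2, ?_, hne, rfl⟩⟩
      · simp only [Finset.mem_sdiff]; exact ⟨Finset.mem_univ _, hb1.2⟩
      · simp only [Finset.mem_sdiff]; exact ⟨Finset.mem_univ _, hb2.2⟩
    · exact ⟨_, A, hAsub, hAcard, Or.inl ⟨hko, rfl⟩⟩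
  · intro H hH
    obtain ⟨A, hAsub, hAcard, hcase⟩ := hH
    have hBex : ∃ b : Fin n, b ∉ A := by
      by_contra h
      push_neg at h
      have hsub : (Finset.univ : Finset (Fin n)) ⊆ A := fun x _ => h x
      have := Finset.card_le_card hsub
      rw [Finset.card_univ, Fintype.card_fin, hAcard] at this
      omega
    rcases hcase with ⟨hko, rfl⟩ | ⟨hke, b1, hb1, b2, hb2, hb12, rfl⟩
    · -- odd case
      obtain ⟨m, hm⟩ := hko
      have hlen : ∀ t, Nonempty (BergePath (HnkFamilyOdd r Finset.univ A) t) →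
          t ≤ k - 1 := by
        rintro t ⟨P⟩
        have hb := bound_odd (A := A) ?_ P
        · rw [hAcard] at hb; omega
        · intro e he x hx y hy hxy hxA
          exact odd_no_two he hx hy hxy hxA
      refine ⟨?_, ?_, hlen, ?_⟩
      · exact Hnk_connected (fun s hs => hs) hr (by omega) hBex
      · exact ⟨fun P => by have := hlen k ⟨P⟩; omega⟩
      · rw [card_HnkFamilyOdd r (by omega) _ A hAsub, hAcard,
          Finset.card_univ, Fintype.card_fin]
        unfold extremalCount
        rw [if_neg (by omega)]
        ring
    · -- even case
      obtain ⟨m, hm⟩ := hke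
      have hlen : ∀ t, Nonempty (BergePath (HnkFamilyEven r Finset.univ A b1 b2) t) →
          t ≤ k - 1 := by
        rintro t ⟨P⟩
        have hb := bound_even (A := A) (b1 := b1) (b2 := b2) ?_ P
        · rw [hAcard] at hb; omega
        · intro e he x hx y hy hxy hxA hyA
          exact even_pair he hx hy hxy hxA hyA
      refine ⟨?_, ?_, hlen, ?_⟩
      · exact Hnk_connected (fun s hs => odd_subset_even r _ A b1 b2 hs) hr (by omega) hBex
      · exact ⟨fun P => by have := hlen k ⟨P⟩; omega⟩
      · rw [card_HnkFamilyEven r hr _ A hAsub hb1 hb2 hb12, hAcard,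
          Finset.card_univ, Fintype.card_fin]
        unfold extremalCount
        rw [if_pos (by omega)]
        ring
end

section
/- Let k and r be integers with k ≥ 2r+13 ≥ 18, and let H' be an r-uniform hypergraph with at least one hyperedge, containing no Berge-path of length k, in which every vertex has degree at least C(⌊(k-1)/2⌋, r-1). Then H' contains a longest Berge-path P, with defining vertices u_1, ..., u_{l+1} and set of defining hyperedges F = {f_1, ..., f_l}, such that |N_{H'∖F}(u_1)| ≥ ⌊(k-1)/2⌋ and |N_{H'∖F}(u_{l+1})| ≥ ⌊(k-1)/2⌋. -/
open scoped Classical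

section AuxiliaryLemmas

namespace BergePath

variable {V : Type*} {H : Finset (Finset V)} {t : ℕ}

/-- Truncation of a Berge path to a shorter length. -/
def trunc (P : BergePath H t) (s : ℕ) (hs : s ≤ t) : BergePath H s where
  verts i := P.verts ⟨i.1, by omega⟩
  edges i := P.edges ⟨i.1, by omega⟩
  verts_inj a b hab := Fin.ext (by simpa using congrArg Fin.val (P.verts_inj hab))
  edges_inj a b hab := Fin.ext (by simpa using congrArg Fin.val (P.edges_inj hab))
  edges_mem i := P.edges_mem _
  fst_mem i := P.fst_mem ⟨i.1, by omega⟩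
  snd_mem i := P.snd_mem ⟨i.1, by omega⟩

/-- Reversal of a Berge path. -/
def rev' (P : BergePath H t) : BergePath H t where
  verts i := P.verts ⟨t - i.1, by omega⟩
  edges i := P.edges ⟨t - 1 - i.1, by omega⟩
  verts_inj a b hab := by
    have h := congrArg Fin.val (P.verts_inj hab)
    simp only at h
    exact Fin.ext (by have := a.isLt; have := b.isLt; omega)
  edges_inj a b hab := by
    have h := congrArg Fin.val (P.edges_inj hab)
    simp only at h
    exact Fin.ext (by have := a.isLt; have := b.isLt; omega)
  edges_mem i := P.edges_mem _
  fst_mem i := by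
    have h := P.snd_mem ⟨t - 1 - i.1, by omega⟩
    have e1 : ((⟨t - 1 - i.1, by omega⟩ : Fin t).succ : Fin (t+1))
        = ⟨t - (i.castSucc).1, by omega⟩ := by
      apply Fin.ext; simp [Fin.val_succ]; omega
    rw [e1] at h
    exact h
  snd_mem i := by
    have h := P.fst_mem ⟨t - 1 - i.1, by omega⟩
    have e1 : ((⟨t - 1 - i.1, by omega⟩ : Fin t).castSucc : Fin (t+1))
        = ⟨t - (i.succ).1, by omega⟩ := by
      apply Fin.ext; simp; omega
    rw [e1] at h
    exact h

lemma rev'_verts_zero (P : BergePath H t) : P.rev'.verts 0 = P.verts (Fin.last t) := by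
  show P.verts _ = _
  exact congrArg P.verts (Fin.ext (by simp [Fin.last]))

lemma rev'_verts_last (P : BergePath H t) : P.rev'.verts (Fin.last t) = P.verts 0 := by
  show P.verts _ = _
  exact congrArg P.verts (Fin.ext (by simp [Fin.last]))

lemma forall_ne_iff {α : Type*} {ι κ : Sort*} {f : ι → α} {g : κ → α}
    (h1 : ∀ i, ∃ j, f i = g j) (h2 : ∀ j, ∃ i, g j = f i) (e : α) :
    (∀ i, e ≠ f i) ↔ (∀ j, e ≠ g j) := by
  constructor
  · intro h j; obtain ⟨i, hi⟩ := h2 j; rw [hi]; exact h i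
  · intro h i; obtain ⟨j, hj⟩ := h1 i; rw [hj]; exact h j

lemma rev'_edges_iff (P : BergePath H t) (e : Finset V) :
    (∀ i, e ≠ P.rev'.edges i) ↔ (∀ i, e ≠ P.edges i) := by
  apply forall_ne_iff
  · intro i; exact ⟨⟨t - 1 - i.1, by omega⟩, rfl⟩
  · intro j
    refine ⟨⟨t - 1 - j.1, by omega⟩, ?_⟩
    show P.edges j = P.edges ⟨t - 1 - (t - 1 - j.1), _⟩
    exact congrArg P.edges (Fin.ext (by have := j.isLt; simp; omega))

def rot (P : BergePath H t) (j : Fin t) (hj : P.verts 0 ∈ P.edges j) : BergePath H t where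
  verts i := if i.1 ≤ j.1 then P.verts ⟨j.1 - i.1, by have := j.isLt; omega⟩ else P.verts i
  edges i := if i.1 < j.1 then P.edges ⟨j.1 - 1 - i.1, by have := j.isLt; omega⟩
             else if i.1 = j.1 then P.edges j else P.edges i
  verts_inj a b hab := by
    have hab' : (if a.1 ≤ j.1 then P.verts ⟨j.1 - a.1, by have := j.isLt; omega⟩ else P.verts a)
        = (if b.1 ≤ j.1 then P.verts ⟨j.1 - b.1, by have := j.isLt; omega⟩ else P.verts b) := hab
    have hja := a.isLt; have hjb := b.isLt; have hjt := j.isLt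
    split_ifs at hab' with h1 h2 h2 <;>
    · have h := congrArg Fin.val (P.verts_inj hab')
      simp -failIfUnchanged only [Fin.val_mk] at h
      exact Fin.ext (by omega)
  edges_inj a b hab := by
    have hab' : (if a.1 < j.1 then P.edges ⟨j.1 - 1 - a.1, by have := j.isLt; omega⟩
          else if a.1 = j.1 then P.edges j else P.edges a)
        = (if b.1 < j.1 then P.edges ⟨j.1 - 1 - b.1, by have := j.isLt; omega⟩
          else if b.1 = j.1 then P.edges j else P.edges b) := hab
    have hja := a.isLt; have hjb := b.isLt; have hjt := j.isLt
    split_ifs at hab' with h1 h2 h2 h3 h3 h4 h4 h5 h5 <;>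
    · have h := congrArg Fin.val (P.edges_inj hab')
      simp -failIfUnchanged only [Fin.val_mk] at h
      exact Fin.ext (by omega)
  edges_mem i := by dsimp -failIfUnchanged only; split_ifs <;> exact P.edges_mem _
  fst_mem i := by
    dsimp -failIfUnchanged only
    have hjt := j.isLt
    rcases lt_trichotomy i.1 j.1 with h | h | h
    · have c1 : (i.castSucc).1 ≤ j.1 := by simp only [Fin.coe_castSucc]; omega
      rw [if_pos c1, if_pos h]
      convert P.snd_mem ⟨j.1 - 1 - i.1, by omega⟩ using 2
      apply Fin.ext
      simp only [Fin.val_mk, Fin.val_succ, Fin.coe_castSucc]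
      omega
    · have c1 : (i.castSucc).1 ≤ j.1 := by simp only [Fin.coe_castSucc]; omega
      rw [if_pos c1, if_neg (show ¬ i.1 < j.1 by omega), if_pos h]
      convert hj using 2
      apply Fin.ext
      simp only [Fin.val_mk, Fin.coe_castSucc, Fin.val_zero]
      omega
    · have c1 : ¬ (i.castSucc).1 ≤ j.1 := by simp only [Fin.coe_castSucc]; omega
      rw [if_neg c1, if_neg (show ¬ i.1 < j.1 by omega), if_neg (show ¬ i.1 = j.1 by omega)]
      exact P.fst_mem i
  snd_mem i := by
    dsimp -failIfUnchanged only
    have hjt := j.isLt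
    rcases lt_trichotomy i.1 j.1 with h | h | h
    · have c1 : (i.succ).1 ≤ j.1 := by simp only [Fin.val_succ]; omega
      rw [if_pos c1, if_pos h]
      convert P.fst_mem ⟨j.1 - 1 - i.1, by omega⟩ using 2
      apply Fin.ext
      simp only [Fin.val_mk, Fin.coe_castSucc, Fin.val_succ]
      omega
    · have c1 : ¬ (i.succ).1 ≤ j.1 := by simp only [Fin.val_succ]; omega
      rw [if_neg c1, if_neg (show ¬ i.1 < j.1 by omega), if_pos h]
      have hij : i = j := Fin.ext h
      subst hij
      exact P.snd_mem i
    · have c1 : ¬ (i.succ).1 ≤ j.1 := by simp only [Fin.val_succ]; omega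
      rw [if_neg c1, if_neg (show ¬ i.1 < j.1 by omega), if_neg (show ¬ i.1 = j.1 by omega)]
      exact P.snd_mem i

lemma rot_verts_def (P : BergePath H t) (j : Fin t) (hj : P.verts 0 ∈ P.edges j)
    (i : Fin (t+1)) :
    (P.rot j hj).verts i
      = if i.1 ≤ j.1 then P.verts ⟨j.1 - i.1, by have := j.isLt; omega⟩ else P.verts i := rfl

lemma rot_edges_def (P : BergePath H t) (j : Fin t) (hj : P.verts 0 ∈ P.edges j) (i : Fin t) :
    (P.rot j hj).edges i
      = if i.1 < j.1 then P.edges ⟨j.1 - 1 - i.1, by have := j.isLt; omega⟩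
        else if i.1 = j.1 then P.edges j else P.edges i := rfl

lemma rot_verts_zero (P : BergePath H t) (j : Fin t) (hj : P.verts 0 ∈ P.edges j) :
    (P.rot j hj).verts 0 = P.verts j.castSucc := by
  rw [rot_verts_def, if_pos (by simp)]
  exact congrArg P.verts (Fin.ext (by simp))

lemma rot_verts_last (P : BergePath H t) (j : Fin t) (hj : P.verts 0 ∈ P.edges j) :
    (P.rot j hj).verts (Fin.last t) = P.verts (Fin.last t) := by
  rw [rot_verts_def, if_neg]
  have := j.isLt
  simp only [Fin.val_last]
  omega

lemma forall_ne_iff' {α : Type*} {ι κ : Sort*} {f : ι → α} {g : κ → α}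
    (h1 : ∀ i, ∃ j, f i = g j) (h2 : ∀ j, ∃ i, g j = f i) (e : α) :
    (∀ i, e ≠ f i) ↔ (∀ j, e ≠ g j) := by
  constructor
  · intro h j; obtain ⟨i, hi⟩ := h2 j; rw [hi]; exact h i
  · intro h i; obtain ⟨j, hj⟩ := h1 i; rw [hj]; exact h j

lemma rot_edges_iff (P : BergePath H t) (j : Fin t) (hj : P.verts 0 ∈ P.edges j)
    (e : Finset V) :
    (∀ i, e ≠ (P.rot j hj).edges i) ↔ (∀ i, e ≠ P.edges i) := by
  have hjt := j.isLt
  apply forall_ne_iff'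
  · intro i
    rw [rot_edges_def]
    split_ifs <;> exact ⟨_, rfl⟩
  · intro i
    rcases lt_trichotomy i.1 j.1 with h | h | h
    · refine ⟨⟨j.1 - 1 - i.1, by omega⟩, ?_⟩
      rw [rot_edges_def, if_pos (show j.1 - 1 - i.1 < j.1 by omega)]
      exact congrArg P.edges (Fin.ext (by simp only [Fin.val_mk]; omega))
    · refine ⟨j, ?_⟩
      rw [rot_edges_def, if_neg (by omega), if_pos rfl]
      exact congrArg P.edges (Fin.ext (by omega))
    · refine ⟨i, ?_⟩
      rw [rot_edges_def, if_neg (by omega), if_neg (by omega)]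

end BergePath

/-- Key counting bound: degree of `v` is at most (#(r-1)-subsets of its `F`-avoiding
neighborhood) plus the number of edges of the family `f` containing `v`. -/
lemma count_key {V : Type*} [Fintype V] (H : Finset (Finset V)) (r : ℕ) (hr : 1 ≤ r)
    (huni : ∀ e ∈ H, e.card = r) {t : ℕ} (f : Fin t → Finset V) (v : V) :
    hdeg H v ≤ ((nbhd (H.filter (fun e => ∀ i, e ≠ f i)) v).card).choose (r-1)
      + (Finset.univ.filter (fun i : Fin t => v ∈ f i)).card := by
  classical
  set N := nbhd (H.filter (fun e => ∀ i, e ≠ f i)) v with hN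
  set s := H.filter (fun e => v ∈ e) with hs
  have hsplit : (s.filter (fun e => ∀ i, e ≠ f i)).card
      + (s.filter (fun e => ¬ ∀ i, e ≠ f i)).card = s.card :=
    Finset.card_filter_add_card_filter_not _
  have hB : (s.filter (fun e => ¬ ∀ i, e ≠ f i)).card
      ≤ (Finset.univ.filter (fun i : Fin t => v ∈ f i)).card := by
    have hsub : s.filter (fun e => ¬ ∀ i, e ≠ f i)
        ⊆ (Finset.univ.filter (fun i : Fin t => v ∈ f i)).image f := by
      intro e he
      simp only [hs, Finset.mem_filter, not_forall, not_not] at he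
      obtain ⟨⟨heH, hv⟩, i, hi⟩ := he
      refine Finset.mem_image.2 ⟨i, ?_, hi.symm⟩
      simp only [Finset.mem_filter, Finset.mem_univ, true_and]
      rw [← hi]; exact hv
    exact (Finset.card_le_card hsub).trans Finset.card_image_le
  have hA : (s.filter (fun e => ∀ i, e ≠ f i)).card ≤ N.card.choose (r-1) := by
    rw [← Finset.card_powersetCard]
    apply Finset.card_le_card_of_injOn (fun e => e.erase v)
    · intro e he
      simp only [hs, Finset.mem_coe, Finset.mem_filter] at he
      obtain ⟨⟨heH, hv⟩, hne⟩ := he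
      rw [Finset.mem_coe, Finset.mem_powersetCard]
      constructor
      · intro u hu
        rw [Finset.mem_erase] at hu
        simp only [hN, nbhd, Finset.mem_filter, Finset.mem_univ, true_and]
        exact ⟨hu.1, e, ⟨heH, hne⟩, hv, hu.2⟩
      · rw [Finset.card_erase_of_mem hv, huni e heH]
    · intro e1 h1 e2 h2 hee
      simp only [hs, Finset.coe_filter, Set.mem_setOf_eq, Finset.mem_filter] at h1 h2
      have hv1 : v ∈ e1 := h1.1.2
      have hv2 : v ∈ e2 := h2.1.2
      have hee' : e1.erase v = e2.erase v := hee
      rw [← Finset.insert_erase hv1, ← Finset.insert_erase hv2, hee']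
  calc hdeg H v = s.card := rfl
    _ = _ + _ := hsplit.symm
    _ ≤ _ := Nat.add_le_add hA hB

/-- Monotonicity of binomial coefficients up to the middle. -/
lemma choose_le_of_le_half (n : ℕ) : ∀ b a, a ≤ b → 2*b ≤ n+1 → n.choose a ≤ n.choose b := by
  intro b
  induction b with
  | zero => intro a ha _; interval_cases a; exact le_rfl
  | succ c ih =>
    intro a ha hb
    rcases Nat.eq_or_lt_of_le ha with h | h
    · subst h; exact le_rfl
    · have h1 : n.choose a ≤ n.choose c := ih a (by omega) (by omega)
      refine h1.trans ?_
      have hk := Nat.choose_succ_right_eq n c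
      have h2 : n.choose c * (c+1) ≤ n.choose (c+1) * (c+1) := by
        rw [hk]
        exact Nat.mul_le_mul_left _ (by omega)
      exact Nat.le_of_mul_le_mul_right h2 (by omega)

/-- `2m+2 ≤ C(m-1, r-2)` when `4 ≤ r` and `r + 6 ≤ m`. -/
lemma binom_big (r m : ℕ) (hr : 4 ≤ r) (hm : r + 6 ≤ m) : 2*m+2 ≤ (m-1).choose (r-2) := by
  have h2 : 2*m+2 ≤ (m-1).choose 2 := by
    rw [Nat.choose_two_right]
    obtain ⟨a, rfl⟩ : ∃ a, m = a + 10 := ⟨m - 10, by omega⟩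
    have e1 : a + 10 - 1 = a + 9 := by omega
    rw [e1]
    have h3 : (2*(a+10)+2)*2 ≤ (a+9) * (a+9-1) := by
      have e2 : a + 9 - 1 = a + 8 := by omega
      rw [e2]; nlinarith
    omega
  refine h2.trans ?_
  rcases le_or_gt (2*(r-2)) m with h | h
  · exact choose_le_of_le_half (m-1) (r-2) 2 (by omega) (by omega)
  · have hsymm : (m-1).choose (r-2) = (m-1).choose (m-1-(r-2)) :=
      (Nat.choose_symm (by omega)).symm
    rw [hsymm]
    exact choose_le_of_le_half (m-1) (m-1-(r-2)) 2 (by omega) (by omega)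

/-- Splitting `C(m, r-1)`. -/
lemma choose_split (r m : ℕ) (hr : 3 ≤ r) (hm : 1 ≤ m) :
    m.choose (r-1) = (m-1).choose (r-2) + (m-1).choose (r-1) := by
  obtain ⟨a, rfl⟩ : ∃ a, m = a + 1 := ⟨m - 1, by omega⟩
  obtain ⟨b, hb⟩ : ∃ b, r - 1 = b + 1 := ⟨r - 2, by omega⟩
  have hb2 : r - 2 = b := by omega
  rw [hb, hb2, Nat.add_sub_cancel, Nat.choose_succ_succ]

/-- From any Berge path one can produce one of the same length, with the same edge set and
same last vertex, whose first vertex has a large neighborhood avoiding the path edges. -/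
lemma exists_good_start {V : Type*} [Fintype V] (r m l : ℕ)
    (hr3 : 3 ≤ r) (hmr : r + 6 ≤ m) (hl : l ≤ 2*m+1)
    (H' : Finset (Finset V)) (huni : ∀ e ∈ H', e.card = r)
    (hdegmin : ∀ v : V, m.choose (r-1) ≤ hdeg H' v)
    (P : BergePath H' l) :
    ∃ Q : BergePath H' l,
      (∀ e, (∀ i, e ≠ Q.edges i) ↔ (∀ i, e ≠ P.edges i)) ∧
      Q.verts (Fin.last l) = P.verts (Fin.last l) ∧
      m ≤ (nbhd (H'.filter (fun e => ∀ i, e ≠ P.edges i)) (Q.verts 0)).card := by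
  classical
  have hm9 : 9 ≤ m := by omega
  set G := H'.filter (fun e => ∀ i, e ≠ P.edges i) with hG
  -- key degree consequence
  have key : ∀ v : V, (nbhd G v).card < m →
      (m-1).choose (r-2) ≤ (Finset.univ.filter (fun i : Fin l => v ∈ P.edges i)).card := by
    intro v hv
    have h1 := count_key H' r (by omega) huni P.edges v
    rw [← hG] at h1
    have h2 := hdegmin v
    have h3 : ((nbhd G v).card).choose (r-1) ≤ (m-1).choose (r-1) :=
      Nat.choose_le_choose _ (by omega)
    have h4 := choose_split r m hr3 (by omega)
    omega
  by_cases h0 : m ≤ (nbhd G (P.verts 0)).card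
  · exact ⟨P, fun e => Iff.rfl, rfl, h0⟩
  have hFdeg0 := key (P.verts 0) (by omega)
  have hFle : (Finset.univ.filter (fun i : Fin l => P.verts 0 ∈ P.edges i)).card ≤ l := by
    refine (Finset.card_filter_le _ _).trans ?_
    simp
  rcases Nat.lt_or_ge r 4 with hr4 | hr4
  · -- r = 3
    have hr : r = 3 := by omega
    subst hr
    have hone : (m-1).choose (3-2) = m - 1 := Nat.choose_one_right _
    set J := Finset.univ.filter (fun i : Fin l => P.verts 0 ∈ P.edges i) with hJ
    have hJcard : m - 1 ≤ J.card := by rw [← hone]; exact hFdeg0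
    by_cases hrot : ∃ j ∈ J, m ≤ (nbhd G (P.verts j.castSucc)).card
    · obtain ⟨j, hjJ, hjgood⟩ := hrot
      have hj : P.verts 0 ∈ P.edges j := by
        simpa [hJ, Finset.mem_filter] using hjJ
      refine ⟨P.rot j hj, P.rot_edges_iff j hj, P.rot_verts_last j hj, ?_⟩
      rw [P.rot_verts_zero j hj]
      exact hjgood
    · exfalso
      push_neg at hrot
      have hFd : ∀ j ∈ J, m - 1 ≤
          (Finset.univ.filter (fun i : Fin l => P.verts j.castSucc ∈ P.edges i)).card := by
        intro j hj
        rw [← hone]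
        exact key _ (hrot j hj)
      have hsum1 : (m-1) * J.card ≤
          ∑ j ∈ J, (Finset.univ.filter (fun i : Fin l => P.verts j.castSucc ∈ P.edges i)).card := by
        calc (m-1) * J.card = ∑ _j ∈ J, (m-1) := by rw [Finset.sum_const, smul_eq_mul, mul_comm]
          _ ≤ _ := Finset.sum_le_sum hFd
      have hsum2 :
          ∑ j ∈ J, (Finset.univ.filter (fun i : Fin l => P.verts j.castSucc ∈ P.edges i)).card
            ≤ 3 * l := by
        have hrw : ∀ j : Fin l,
            (Finset.univ.filter (fun i : Fin l => P.verts j.castSucc ∈ P.edges i)).card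
              = ∑ i : Fin l, if P.verts j.castSucc ∈ P.edges i then 1 else 0 := by
          intro j; rw [Finset.card_filter]
        rw [Finset.sum_congr rfl (fun j _ => hrw j), Finset.sum_comm]
        have hbound : ∀ i : Fin l,
            (∑ j ∈ J, if P.verts j.castSucc ∈ P.edges i then 1 else 0) ≤ 3 := by
          intro i
          rw [← Finset.card_filter]
          have hmaps : ∀ j ∈ J.filter (fun j => P.verts j.castSucc ∈ P.edges i),
              P.verts j.castSucc ∈ P.edges i := fun j hj => (Finset.mem_filter.1 hj).2
          have hinj : Set.InjOn (fun j : Fin l => P.verts j.castSucc)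
              (J.filter (fun j => P.verts j.castSucc ∈ P.edges i)) := by
            intro a _ b _ hab
            exact Fin.castSucc_injective _ (P.verts_inj hab)
          calc (J.filter (fun j => P.verts j.castSucc ∈ P.edges i)).card
              ≤ (P.edges i).card := Finset.card_le_card_of_injOn _ hmaps hinj
            _ = 3 := huni _ (P.edges_mem i)
        calc ∑ i : Fin l, (∑ j ∈ J, if P.verts j.castSucc ∈ P.edges i then 1 else 0)
            ≤ ∑ _i : Fin l, 3 := Finset.sum_le_sum (fun i _ => hbound i)
          _ = 3 * l := by simp [Finset.sum_const, Finset.card_univ, mul_comm]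
      have h9 : (m-1)*(m-1) ≤ (m-1) * J.card := Nat.mul_le_mul_left _ hJcard
      have h10 : 8*(m-1) ≤ (m-1)*(m-1) := Nat.mul_le_mul_right _ (by omega)
      omega
  · -- r ≥ 4 : contradiction
    exfalso
    have hbig := binom_big r m hr4 hmr
    omega

end AuxiliaryLemmas

/-- Let `k ≥ 2r+13 ≥ 18` and let `H'` be an `r`-uniform hypergraph with at
least one hyperedge, no Berge-path of length `k`, and minimum degree at least
`C(⌊(k-1)/2⌋, r-1)`. Then `H'` contains a longest Berge-path `P` both of whose terminal
vertices have at least `⌊(k-1)/2⌋` neighbors in `H'` minus the defining hyperedges of `P`. -/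
theorem longest_path_with_large_end_neighborhoods
    {V : Type*} [Fintype V] (r k : ℕ) (hk : 2 * r + 13 ≤ k) (hr : 18 ≤ 2 * r + 13)
    (H' : Finset (Finset V)) (hne : H'.Nonempty)
    (huni : ∀ e ∈ H', e.card = r)
    (hpath : IsEmpty (BergePath H' k))
    (hdegmin : ∀ v : V, ((k - 1) / 2).choose (r - 1) ≤ hdeg H' v) :
    ∃ (l : ℕ) (P : BergePath H' l),
      (∀ t, Nonempty (BergePath H' t) → t ≤ l) ∧
      (k - 1) / 2 ≤ (nbhd (H'.filter (fun e => ∀ i, e ≠ P.edges i)) (P.verts 0)).card ∧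
      (k - 1) / 2 ≤
        (nbhd (H'.filter (fun e => ∀ i, e ≠ P.edges i)) (P.verts (Fin.last l))).card := by
  classical
  have hr3 : 3 ≤ r := by omega
  set m : ℕ := (k - 1) / 2 with hm
  have hmr : r + 6 ≤ m := by omega
  -- a Berge path of length 1
  obtain ⟨e0, he0⟩ := hne
  have hcard : 1 < e0.card := by rw [huni e0 he0]; omega
  obtain ⟨a, ha, b, hb, hab⟩ := Finset.one_lt_card.1 hcard
  have h1 : Nonempty (BergePath H' 1) := by
    refine ⟨⟨![a, b], fun _ => e0, ?_, ?_, fun _ => he0, ?_, ?_⟩⟩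
    · intro i j h
      fin_cases i <;> fin_cases j <;> simp_all
    · intro i j _
      exact Subsingleton.elim i j
    · intro i
      fin_cases i
      simpa using ha
    · intro i
      fin_cases i
      simpa using hb
  -- the maximal length
  set l := Nat.findGreatest (fun t => Nonempty (BergePath H' t)) k with hldef
  have hlP : Nonempty (BergePath H' l) := by
    rw [hldef]
    exact Nat.findGreatest_spec (P := fun t => Nonempty (BergePath H' t)) (by omega : 1 ≤ k) h1
  have hlk : l ≤ k := by
    rw [hldef]
    exact Nat.findGreatest_le (P := fun t => Nonempty (BergePath H' t)) k
  have hlne : l ≠ k := by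
    intro h
    exact hpath.false (h ▸ hlP.some)
  have hmax : ∀ t, Nonempty (BergePath H' t) → t ≤ l := by
    intro t ht
    by_cases htk : t ≤ k
    · rw [hldef]
      exact Nat.le_findGreatest (P := fun t => Nonempty (BergePath H' t)) htk ht
    · exact absurd (⟨ht.some.trunc k (by omega)⟩ : Nonempty (BergePath H' k))
        (fun h => hpath.false h.some)
  have hl2m : l ≤ 2*m+1 := by omega
  obtain ⟨P0⟩ := hlP
  have hdegmin' : ∀ v : V, m.choose (r-1) ≤ hdeg H' v := hdegmin
  -- first pass: make the (eventual) last end good, working on the reversed path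
  obtain ⟨Q1, hQ1iff, _hQ1last, hQ1good⟩ :=
    exists_good_start r m l hr3 hmr hl2m H' huni hdegmin' P0.rev'
  -- hQ1good is stated w.r.t. the filter of P0.rev'; rewrite to Q1's own filter
  have hfilter1 : H'.filter (fun e => ∀ i, e ≠ P0.rev'.edges i)
      = H'.filter (fun e => ∀ i, e ≠ Q1.edges i) :=
    Finset.filter_congr (fun e _ => (hQ1iff e).symm)
  rw [hfilter1] at hQ1good
  -- second pass on the reversal of Q1
  obtain ⟨Q2, hQ2iff, hQ2last, hQ2good⟩ :=
    exists_good_start r m l hr3 hmr hl2m H' huni hdegmin' Q1.rev'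
  have hfilter2 : H'.filter (fun e => ∀ i, e ≠ Q1.rev'.edges i)
      = H'.filter (fun e => ∀ i, e ≠ Q2.edges i) :=
    Finset.filter_congr (fun e _ => (hQ2iff e).symm)
  have hfilter3 : H'.filter (fun e => ∀ i, e ≠ Q1.edges i)
      = H'.filter (fun e => ∀ i, e ≠ Q2.edges i) := by
    rw [← hfilter2]
    exact Finset.filter_congr (fun e _ => (Q1.rev'_edges_iff e).symm)
  refine ⟨l, Q2, hmax, ?_, ?_⟩
  · rw [hfilter2] at hQ2good
    exact hQ2good
  · have hv : Q2.verts (Fin.last l) = Q1.verts 0 := hQ2last.trans (Q1.rev'_verts_last)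
    rw [hv, ← hfilter3]
    exact hQ1good
end

section
/- Let H' be an r-uniform hypergraph whose longest Berge-paths have length l ≥ 1, and among all Berge-paths of length l in H' choose one, with defining vertices u_1, ..., u_{l+1} and defining hyperedges F = {f_1, ..., f_l}, that minimizes the quantity x_1 + x_{l+1}, where x_1 (respectively x_{l+1}) is the number of hyperedges of F containing u_1 (respectively u_{l+1}). Then x_1 ≤ √(r·l) and x_{l+1} ≤ √(r·l). -/
open scoped Classical

lemma aux_filter_card_involutive {α : Type*} [Fintype α] (σ : α → α)
    (hσ : Function.Involutive σ) (p : α → Prop) [DecidablePred p]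
    [DecidablePred fun a => p (σ a)] :
    (Finset.univ.filter (fun a => p (σ a))).card = (Finset.univ.filter p).card := by
  have h : Finset.univ.filter (fun a => p (σ a)) = (Finset.univ.filter p).image σ := by
    ext a
    simp only [Finset.mem_filter, Finset.mem_image, Finset.mem_univ, true_and]
    constructor
    · intro h; exact ⟨σ a, h, hσ a⟩
    · rintro ⟨b, hb, rfl⟩; rwa [hσ b]
  rw [h, Finset.card_image_of_injective _ hσ.injective]

/-- vertex-index map of the rotation at position `i`. -/
def rvert {l : ℕ} (i : Fin l) (j : Fin (l + 1)) : Fin (l + 1) :=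
  if j.val ≤ i.val then ⟨i.val - j.val, by have := i.isLt; omega⟩ else j

/-- edge-index map of the rotation at position `i`. -/
def redge {l : ℕ} (i : Fin l) (j : Fin l) : Fin l :=
  if j.val < i.val then ⟨i.val - 1 - j.val, by have := i.isLt; omega⟩ else j

lemma rvert_le {l : ℕ} (i : Fin l) (j : Fin (l + 1)) (h : j.val ≤ i.val) :
    rvert i j = ⟨i.val - j.val, by have := i.isLt; omega⟩ := if_pos h

lemma rvert_gt {l : ℕ} (i : Fin l) (j : Fin (l + 1)) (h : i.val < j.val) :
    rvert i j = j := if_neg (by omega)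

lemma redge_lt {l : ℕ} (i : Fin l) (j : Fin l) (h : j.val < i.val) :
    redge i j = ⟨i.val - 1 - j.val, by have := i.isLt; omega⟩ := if_pos h

lemma redge_ge {l : ℕ} (i : Fin l) (j : Fin l) (h : i.val ≤ j.val) :
    redge i j = j := if_neg (by omega)

lemma rvert_inv {l : ℕ} (i : Fin l) : Function.Involutive (rvert i) := by
  intro j
  by_cases h : j.val ≤ i.val
  · rw [rvert_le i j h, rvert_le i _ (Nat.sub_le _ _)]
    exact Fin.ext (by show i.val - (i.val - j.val) = j.val; omega)
  · rw [rvert_gt i j (by omega), rvert_gt i j (by omega)]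

lemma redge_inv {l : ℕ} (i : Fin l) : Function.Involutive (redge i) := by
  intro j
  by_cases h : j.val < i.val
  · rw [redge_lt i j h, redge_lt i _ (show i.val - 1 - j.val < i.val by omega)]
    exact Fin.ext (by show i.val - 1 - (i.val - 1 - j.val) = j.val; omega)
  · rw [redge_ge i j (by omega), redge_ge i j (by omega)]

/-- Rotation of a Berge path at position `i`, when the first vertex lies in edge `i`. -/
def rotPath {V : Type*} {H : Finset (Finset V)} {l : ℕ} (P : BergePath H l) (i : Fin l)
    (hi : P.verts 0 ∈ P.edges i) : BergePath H l where
  verts := P.verts ∘ rvert i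
  edges := P.edges ∘ redge i
  verts_inj := P.verts_inj.comp (rvert_inv i).injective
  edges_inj := P.edges_inj.comp (redge_inv i).injective
  edges_mem := fun j => P.edges_mem _
  fst_mem := by
    intro j
    simp only [Function.comp]
    rcases lt_trichotomy j.val i.val with h | h | h
    · have h2 : rvert i j.castSucc = Fin.succ ⟨i.val - 1 - j.val, by have := i.isLt; omega⟩ := by
        rw [rvert_le i _ (show j.castSucc.val ≤ i.val by rw [Fin.coe_castSucc]; omega)]
        exact Fin.ext (by simp only [Fin.val_succ, Fin.coe_castSucc]; omega)
      have h3 : redge i j = ⟨i.val - 1 - j.val, by have := i.isLt; omega⟩ := redge_lt i j h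
      rw [h2, h3]; exact P.snd_mem _
    · have h2 : rvert i j.castSucc = 0 := by
        rw [rvert_le i _ (show j.castSucc.val ≤ i.val by rw [Fin.coe_castSucc]; omega)]
        exact Fin.ext (by simp only [Fin.coe_castSucc, Fin.val_zero]; omega)
      have h3 : redge i j = i := by rw [redge_ge i j (by omega)]; exact Fin.ext h
      rw [h2, h3]; exact hi
    · have h2 : rvert i j.castSucc = j.castSucc :=
        rvert_gt i _ (by rw [Fin.coe_castSucc]; omega)
      have h3 : redge i j = j := redge_ge i j (by omega)
      rw [h2, h3]; exact P.fst_mem j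
  snd_mem := by
    intro j
    simp only [Function.comp]
    by_cases h : j.val < i.val
    · have h2 : rvert i j.succ = Fin.castSucc ⟨i.val - 1 - j.val, by have := i.isLt; omega⟩ := by
        rw [rvert_le i _ (show j.succ.val ≤ i.val by rw [Fin.val_succ]; omega)]
        exact Fin.ext (by simp only [Fin.val_succ, Fin.coe_castSucc]; omega)
      have h3 : redge i j = ⟨i.val - 1 - j.val, by have := i.isLt; omega⟩ := redge_lt i j h
      rw [h2, h3]; exact P.fst_mem _
    · have h2 : rvert i j.succ = j.succ := rvert_gt i _ (by rw [Fin.val_succ]; omega)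
      have h3 : redge i j = j := redge_ge i j (by omega)
      rw [h2, h3]; exact P.snd_mem j

lemma rotPath_verts_zero {V : Type*} {H : Finset (Finset V)} {l : ℕ} (P : BergePath H l)
    (i : Fin l) (hi : P.verts 0 ∈ P.edges i) :
    (rotPath P i hi).verts 0 = P.verts i.castSucc := by
  show P.verts (rvert i 0) = _
  rw [rvert_le i 0 (by simp)]
  exact congrArg P.verts (Fin.ext (by simp))

lemma rotPath_verts_last {V : Type*} {H : Finset (Finset V)} {l : ℕ} (P : BergePath H l)
    (i : Fin l) (hi : P.verts 0 ∈ P.edges i) :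
    (rotPath P i hi).verts (Fin.last l) = P.verts (Fin.last l) := by
  show P.verts (rvert i (Fin.last l)) = _
  rw [rvert_gt i _ (by simp only [Fin.val_last]; exact i.isLt)]

lemma rotPath_filter0 {V : Type*} {H : Finset (Finset V)} {l : ℕ} (P : BergePath H l)
    (i : Fin l) (hi : P.verts 0 ∈ P.edges i) :
    (Finset.univ.filter (fun j : Fin l =>
        (rotPath P i hi).verts 0 ∈ (rotPath P i hi).edges j)).card =
      (Finset.univ.filter (fun j : Fin l => P.verts i.castSucc ∈ P.edges j)).card := by
  rw [rotPath_verts_zero P i hi]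
  exact aux_filter_card_involutive (redge i) (redge_inv i)
    (fun j => P.verts i.castSucc ∈ P.edges j)

lemma rotPath_filter_last {V : Type*} {H : Finset (Finset V)} {l : ℕ} (P : BergePath H l)
    (i : Fin l) (hi : P.verts 0 ∈ P.edges i) :
    (Finset.univ.filter (fun j : Fin l =>
        (rotPath P i hi).verts (Fin.last l) ∈ (rotPath P i hi).edges j)).card =
      (Finset.univ.filter (fun j : Fin l => P.verts (Fin.last l) ∈ P.edges j)).card := by
  rw [rotPath_verts_last P i hi]
  exact aux_filter_card_involutive (redge i) (redge_inv i)
    (fun j => P.verts (Fin.last l) ∈ P.edges j)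

/-- Key rotation lemma: the first-endpoint count squared is at most `r * l`. -/
lemma aux_first_end_sq_le {V : Type*} {r l : ℕ} {H : Finset (Finset V)}
    (huni : ∀ e ∈ H, e.card = r) (P : BergePath H l)
    (hmin : ∀ Q : BergePath H l,
      (Finset.univ.filter (fun i : Fin l => P.verts 0 ∈ P.edges i)).card +
        (Finset.univ.filter (fun i : Fin l => P.verts (Fin.last l) ∈ P.edges i)).card ≤
      (Finset.univ.filter (fun i : Fin l => Q.verts 0 ∈ Q.edges i)).card +
        (Finset.univ.filter (fun i : Fin l => Q.verts (Fin.last l) ∈ Q.edges i)).card) :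
    (Finset.univ.filter (fun i : Fin l => P.verts 0 ∈ P.edges i)).card ^ 2 ≤ r * l := by
  classical
  set A := Finset.univ.filter (fun i : Fin l => P.verts 0 ∈ P.edges i) with hA
  have key : ∀ i : Fin l, P.verts 0 ∈ P.edges i →
      A.card ≤ (Finset.univ.filter (fun j : Fin l => P.verts i.castSucc ∈ P.edges j)).card := by
    intro i hi
    have h1 := hmin (rotPath P i hi)
    rw [rotPath_filter0 P i hi, rotPath_filter_last P i hi] at h1
    omega
  set B := A.image (fun i : Fin l => P.verts i.castSucc) with hB
  have hBcard : B.card = A.card :=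
    Finset.card_image_of_injective A (P.verts_inj.comp (Fin.castSucc_injective l))
  have hdegB : ∀ u ∈ B, A.card ≤ (Finset.univ.filter (fun j : Fin l => u ∈ P.edges j)).card := by
    intro u hu
    obtain ⟨i, hi, rfl⟩ := Finset.mem_image.mp hu
    exact key i (Finset.mem_filter.mp hi).2
  have h1 : A.card * A.card ≤
      ∑ u ∈ B, (Finset.univ.filter (fun j : Fin l => u ∈ P.edges j)).card := by
    calc A.card * A.card = B.card • A.card := by rw [hBcard, smul_eq_mul]
    _ ≤ _ := Finset.card_nsmul_le_sum B _ A.card hdegB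
  have h2 : ∑ u ∈ B, (Finset.univ.filter (fun j : Fin l => u ∈ P.edges j)).card ≤ r * l := by
    calc ∑ u ∈ B, (Finset.univ.filter (fun j : Fin l => u ∈ P.edges j)).card
        = ∑ u ∈ B, ∑ j : Fin l, (if u ∈ P.edges j then 1 else 0) :=
          Finset.sum_congr rfl (fun u _ => Finset.card_filter _ _)
      _ = ∑ j : Fin l, ∑ u ∈ B, (if u ∈ P.edges j then 1 else 0) := Finset.sum_comm
      _ = ∑ j : Fin l, (B.filter (fun u => u ∈ P.edges j)).card :=
          Finset.sum_congr rfl (fun j _ => (Finset.card_filter _ _).symm)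
      _ ≤ ∑ j : Fin l, (P.edges j).card := by
          apply Finset.sum_le_sum
          intro j _
          exact Finset.card_le_card (fun u hu => (Finset.mem_filter.mp hu).2)
      _ = ∑ _j : Fin l, r := Finset.sum_congr rfl (fun j _ => huni _ (P.edges_mem j))
      _ = r * l := by simp [Finset.sum_const, mul_comm]
  calc A.card ^ 2 = A.card * A.card := sq A.card
    _ ≤ r * l := le_trans h1 h2

/-- Reversal of a Berge path. -/
def revPath {V : Type*} {H : Finset (Finset V)} {l : ℕ} (P : BergePath H l) :
    BergePath H l where
  verts := P.verts ∘ Fin.rev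
  edges := P.edges ∘ Fin.rev
  verts_inj := P.verts_inj.comp Fin.rev_involutive.injective
  edges_inj := P.edges_inj.comp Fin.rev_involutive.injective
  edges_mem := fun j => P.edges_mem _
  fst_mem := fun j => by
    simp only [Function.comp]
    rw [Fin.rev_castSucc]
    exact P.snd_mem j.rev
  snd_mem := fun j => by
    simp only [Function.comp]
    rw [Fin.rev_succ]
    exact P.fst_mem j.rev

lemma revPath_verts_zero {V : Type*} {H : Finset (Finset V)} {l : ℕ} (P : BergePath H l) :
    (revPath P).verts 0 = P.verts (Fin.last l) :=
  congrArg P.verts (by simp)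

lemma revPath_verts_last {V : Type*} {H : Finset (Finset V)} {l : ℕ} (P : BergePath H l) :
    (revPath P).verts (Fin.last l) = P.verts 0 :=
  congrArg P.verts (by simp [Fin.rev_last])

lemma revPath_filter0 {V : Type*} {H : Finset (Finset V)} {l : ℕ} (P : BergePath H l) :
    (Finset.univ.filter (fun j : Fin l => (revPath P).verts 0 ∈ (revPath P).edges j)).card =
      (Finset.univ.filter (fun j : Fin l => P.verts (Fin.last l) ∈ P.edges j)).card := by
  rw [revPath_verts_zero P]
  exact aux_filter_card_involutive Fin.rev Fin.rev_involutive
    (fun j => P.verts (Fin.last l) ∈ P.edges j)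

lemma revPath_filter_last {V : Type*} {H : Finset (Finset V)} {l : ℕ} (P : BergePath H l) :
    (Finset.univ.filter
        (fun j : Fin l => (revPath P).verts (Fin.last l) ∈ (revPath P).edges j)).card =
      (Finset.univ.filter (fun j : Fin l => P.verts 0 ∈ P.edges j)).card := by
  rw [revPath_verts_last P]
  exact aux_filter_card_involutive Fin.rev Fin.rev_involutive
    (fun j => P.verts 0 ∈ P.edges j)

/-- If a longest Berge-path of the `r`-uniform hypergraph `H` has length
`l ≥ 1` and `P` is a longest Berge-path minimizing `x₁ + x_{l+1}` (the numbers of defining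
hyperedges containing the first, resp. last, defining vertex), then `x₁ ≤ √(r·l)` and
`x_{l+1} ≤ √(r·l)`. -/
theorem minimal_end_degree_bound
    {V : Type*} (r l : ℕ) (hl : 1 ≤ l) (H : Finset (Finset V))
    (huni : ∀ e ∈ H, e.card = r)
    (hlong : ∀ t, Nonempty (BergePath H t) → t ≤ l)
    (P : BergePath H l)
    (hmin : ∀ Q : BergePath H l,
      (Finset.univ.filter (fun i : Fin l => P.verts 0 ∈ P.edges i)).card +
        (Finset.univ.filter (fun i : Fin l => P.verts (Fin.last l) ∈ P.edges i)).card ≤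
      (Finset.univ.filter (fun i : Fin l => Q.verts 0 ∈ Q.edges i)).card +
        (Finset.univ.filter (fun i : Fin l => Q.verts (Fin.last l) ∈ Q.edges i)).card) :
    ((Finset.univ.filter (fun i : Fin l => P.verts 0 ∈ P.edges i)).card : ℝ) ≤
        Real.sqrt ((r : ℝ) * l) ∧
      ((Finset.univ.filter (fun i : Fin l => P.verts (Fin.last l) ∈ P.edges i)).card : ℝ) ≤
        Real.sqrt ((r : ℝ) * l) := by
  
  have b1 : (Finset.univ.filter (fun i : Fin l => P.verts 0 ∈ P.edges i)).card ^ 2 ≤ r * l :=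
    aux_first_end_sq_le huni P hmin
  have hminrev : ∀ Q : BergePath H l,
      (Finset.univ.filter (fun i : Fin l => (revPath P).verts 0 ∈ (revPath P).edges i)).card +
        (Finset.univ.filter
          (fun i : Fin l => (revPath P).verts (Fin.last l) ∈ (revPath P).edges i)).card ≤
      (Finset.univ.filter (fun i : Fin l => Q.verts 0 ∈ Q.edges i)).card +
        (Finset.univ.filter (fun i : Fin l => Q.verts (Fin.last l) ∈ Q.edges i)).card := by
    intro Q
    rw [revPath_filter0 P, revPath_filter_last P, Nat.add_comm]
    exact hmin Q
  have b2 : (Finset.univ.filter (fun i : Fin l => P.verts (Fin.last l) ∈ P.edges i)).card ^ 2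
      ≤ r * l := by
    have h := aux_first_end_sq_le huni (revPath P) hminrev
    rwa [revPath_filter0 P] at h
  have hle : ∀ x : ℕ, x ^ 2 ≤ r * l → (x : ℝ) ≤ Real.sqrt ((r : ℝ) * l) := by
    intro x hx
    rw [Real.le_sqrt (by positivity) (by positivity)]
    exact_mod_cast hx
  exact ⟨hle _ b1, hle _ b2⟩
end

section
/- Let H be an r-uniform hypergraph and let u_1, f_1, u_2, f_2, ..., f_l, u_{l+1} be a Berge-path of length l in H. Suppose that for some index i with 1 ≤ i ≤ l−1 there exist two distinct hyperedges h_1, h_2 of H, neither belonging to {f_1, ..., f_l}, such that u_1, u_{i+2} ∈ h_1 and u_{l+1}, u_i ∈ h_2. Then H contains a Berge-cycle of length l (with vertex set {u_1, ..., u_i} ∪ {u_{i+2}, ..., u_{l+1}}). -/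
open scoped Classical

set_option maxHeartbeats 2000000 in
/-- Given a Berge-path `u₁, f₁, …, f_l, u_{l+1}` of length `l` in `H` and an
index `1 ≤ i ≤ l−1`, if there are two distinct non-defining hyperedges `h₁, h₂ ∈ H` with
`u₁, u_{i+2} ∈ h₁` and `u_{l+1}, u_i ∈ h₂`, then `H` contains a Berge-cycle of length `l`
whose vertex set is `{u₁, …, u_i} ∪ {u_{i+2}, …, u_{l+1}}`. (Vertices are 1-indexed in the
informal statement; here `P.verts ⟨j-1, _⟩` is `u_j`.) -/
theorem berge_cycle_from_crossing_edges
    {V : Type*} (r l : ℕ) (H : Finset (Finset V)) (huni : ∀ e ∈ H, e.card = r)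
    (P : BergePath H l) (i : ℕ) (hi1 : 1 ≤ i) (hi2 : i ≤ l - 1)
    (h1 h2 : Finset V) (hh1 : h1 ∈ H) (hh2 : h2 ∈ H) (hne : h1 ≠ h2)
    (hf1 : ∀ j, h1 ≠ P.edges j) (hf2 : ∀ j, h2 ≠ P.edges j)
    (hu1 : P.verts 0 ∈ h1) (hui2 : P.verts ⟨i + 1, by omega⟩ ∈ h1)
    (hul : P.verts (Fin.last l) ∈ h2) (hui : P.verts ⟨i - 1, by omega⟩ ∈ h2) :
    ∃ C : BergeCycle H l,
      Set.range C.verts = Set.range P.verts \ {P.verts ⟨i, by omega⟩} := by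
  have hl : 2 ≤ l := by omega
  have hil : i + 1 ≤ l := by omega
  refine ⟨⟨fun j => if j.val < i then P.verts ⟨j.val, by omega⟩
      else P.verts ⟨l - (j.val - i), by omega⟩,
    fun j => if j.val + 1 < i then P.edges ⟨j.val, by omega⟩
      else if j.val + 1 = i then h2
      else if j.val + 1 = l then h1
      else P.edges ⟨l - 1 - (j.val - i), by omega⟩,
    ?_, ?_, ?_, ?_, ?_⟩, ?_⟩
  · -- verts_inj
    intro a b hab
    have ha := a.isLt; have hb := b.isLt
    simp only at hab
    split_ifs at hab <;>
      · have := P.verts_inj hab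
        simp only [Fin.mk.injEq] at this
        exact Fin.ext (by omega)
  · -- edges_inj
    intro a b hab
    have ha := a.isLt; have hb := b.isLt
    simp only at hab
    split_ifs at hab <;>
      first
      | exact absurd hab hne
      | exact absurd hab.symm hne
      | exact absurd hab (hf1 _)
      | exact absurd hab.symm (hf1 _)
      | exact absurd hab (hf2 _)
      | exact absurd hab.symm (hf2 _)
      | exact Fin.ext (by omega)
      | (have := P.edges_inj hab
         simp only [Fin.mk.injEq] at this
         exact Fin.ext (by omega))
  · -- edges_mem
    intro j
    split_ifs <;> first | exact P.edges_mem _ | exact hh1 | exact hh2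
  · -- fst_mem
    intro j
    have hj := j.isLt
    by_cases hA : j.val + 1 < i
    · rw [if_pos (show j.val < i by omega), if_pos hA]
      have h := P.fst_mem ⟨j.val, by omega⟩
      rw [Fin.castSucc_mk] at h
      exact h
    · by_cases hB : j.val + 1 = i
      · rw [if_pos (show j.val < i by omega), if_neg hA, if_pos hB]
        have e : (⟨j.val, by omega⟩ : Fin (l + 1)) = ⟨i - 1, by omega⟩ := Fin.ext (by simp; omega)
        rw [e]; exact hui
      · by_cases hC : j.val + 1 = l
        · rw [if_neg (show ¬ j.val < i by omega), if_neg hA, if_neg hB, if_pos hC]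
          have e : (⟨l - (j.val - i), by omega⟩ : Fin (l + 1)) = ⟨i + 1, by omega⟩ :=
            Fin.ext (by simp; omega)
          rw [e]; exact hui2
        · rw [if_neg (show ¬ j.val < i by omega), if_neg hA, if_neg hB, if_neg hC]
          have h := P.snd_mem ⟨l + i - 1 - j.val, by omega⟩
          rw [Fin.succ_mk] at h
          have e1 : (⟨l - (j.val - i), by omega⟩ : Fin (l + 1)) =
              ⟨l + i - 1 - j.val + 1, by omega⟩ := Fin.ext (by simp; omega)
          have e2 : (⟨l - 1 - (j.val - i), by omega⟩ : Fin l) =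
              ⟨l + i - 1 - j.val, by omega⟩ := Fin.ext (by simp; omega)
          rw [e1, e2]; exact h
  · -- snd_mem
    intro j
    have hj := j.isLt
    by_cases hC : j.val + 1 = l
    · have e0 : (⟨(j.val + 1) % l, Nat.mod_lt _ j.pos⟩ : Fin l) = ⟨0, by omega⟩ :=
        Fin.ext (by simp [hC])
      rw [e0]
      simp only
      rw [if_pos (show (0:ℕ) < i by omega), if_neg (show ¬ j.val + 1 < i by omega),
        if_neg (show ¬ j.val + 1 = i by omega), if_pos hC]
      exact hu1
    · have e0 : (⟨(j.val + 1) % l, Nat.mod_lt _ j.pos⟩ : Fin l) = ⟨j.val + 1, by omega⟩ :=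
        Fin.ext (Nat.mod_eq_of_lt (by omega))
      rw [e0]
      simp only
      by_cases hA : j.val + 1 < i
      · rw [if_pos hA, if_pos hA]
        have h := P.snd_mem ⟨j.val, by omega⟩
        rw [Fin.succ_mk] at h
        exact h
      · by_cases hB : j.val + 1 = i
        · rw [if_neg (show ¬ j.val + 1 < i by omega), if_neg hA, if_pos hB]
          have e : (⟨l - (j.val + 1 - i), by omega⟩ : Fin (l + 1)) =
              ⟨l, by omega⟩ := Fin.ext (by simp; omega)
          rw [e]; exact hul
        · rw [if_neg (show ¬ j.val + 1 < i by omega), if_neg hA, if_neg hB, if_neg hC]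
          have h := P.fst_mem ⟨l + i - 1 - j.val, by omega⟩
          rw [Fin.castSucc_mk] at h
          have e1 : (⟨l - (j.val + 1 - i), by omega⟩ : Fin (l + 1)) =
              ⟨l + i - 1 - j.val, by omega⟩ := Fin.ext (by simp; omega)
          have e2 : (⟨l - 1 - (j.val - i), by omega⟩ : Fin l) =
              ⟨l + i - 1 - j.val, by omega⟩ := Fin.ext (by simp; omega)
          rw [e1, e2]; exact h
  · -- range equality
    ext x
    simp only [Set.mem_range, Set.mem_diff, Set.mem_singleton_iff]
    constructor
    · rintro ⟨j, rfl⟩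
      have hj := j.isLt
      by_cases hjlt : j.val < i
      · rw [if_pos hjlt]
        refine ⟨⟨⟨j.val, by omega⟩, rfl⟩, fun hcon => ?_⟩
        have := P.verts_inj hcon
        simp only [Fin.mk.injEq] at this
        omega
      · rw [if_neg hjlt]
        refine ⟨⟨⟨l - (j.val - i), by omega⟩, rfl⟩, fun hcon => ?_⟩
        have := P.verts_inj hcon
        simp only [Fin.mk.injEq] at this
        omega
    · rintro ⟨⟨k, rfl⟩, hxne⟩
      have hk := k.isLt
      have hki : k.val ≠ i := fun h => hxne (congrArg P.verts (Fin.ext h))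
      by_cases hkl : k.val < i
      · refine ⟨⟨k.val, by omega⟩, ?_⟩
        rw [if_pos (show k.val < i from hkl)]
      · refine ⟨⟨l - (k.val - i), by omega⟩, ?_⟩
        rw [if_neg (show ¬ l - (k.val - i) < i by omega)]
        have e : (⟨l - (l - (k.val - i) - i), by omega⟩ : Fin (l + 1)) = k :=
          Fin.ext (by simp; omega)
        rw [e]
end

section
/- Let H be a connected r-uniform hypergraph and let H' be a sub-hypergraph of H (a subfamily of its hyperedges). Suppose two distinct connected components of H' contain Berge-cycles of lengths a and b respectively (so these two Berge-cycles have disjoint vertex sets and disjoint hyperedge sets). Then H contains a Berge-path whose defining vertices include all a + b vertices of the two Berge-cycles; in particular, H contains a Berge-path of length at least a + b − 1. -/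
open scoped Classical

lemma modShiftInj {c : ℕ} (k : ℕ) {x y : ℕ} (hx : x < c) (hy : y < c)
    (h : (k + x) % c = (k + y) % c) : x = y := by
  have h1 : x ≡ y [MOD c] := Nat.ModEq.add_left_cancel' k h
  rwa [Nat.ModEq, Nat.mod_eq_of_lt hx, Nat.mod_eq_of_lt hy] at h1

lemma modShiftDvd {c k x : ℕ} (h : (k + x) % c = k % c) : c ∣ x := by
  have h1 : k + x ≡ k + 0 [MOD c] := by show (k + x) % c = (k + 0) % c; rw [Nat.add_zero]; exact h
  exact (Nat.modEq_zero_iff_dvd).1 (Nat.ModEq.add_left_cancel' k h1)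

lemma existsShift {c : ℕ} (hc : 0 < c) (k x : ℕ) (hx : x < c) :
    ∃ i, i < c ∧ (k + i) % c = x := by
  refine ⟨(c - k % c + x) % c, Nat.mod_lt _ hc, ?_⟩
  have hkc : k % c < c := Nat.mod_lt _ hc
  have hdm := Nat.div_add_mod k c
  rw [Nat.add_mod_mod]
  have h3 : c * (k / c + 1) = c * (k / c) + c := by ring
  have h2 : k + (c - k % c + x) = c * (k / c + 1) + x := by omega
  rw [h2, Nat.mul_add_mod, Nat.mod_eq_of_lt hx]

lemma suffixRep {V : Type*} {H : Finset (Finset V)} {t : ℕ} (P : BergePath H t)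
    (i : ℕ) (hi : i < t) (x : V) (hx : x ∈ P.edges ⟨i, hi⟩)
    (hx2 : ∀ j : Fin (t + 1), i < j.val → x ≠ P.verts j) :
    ∃ Q : BergePath H (t - i), Q.verts 0 = x ∧
      Q.verts (Fin.last (t - i)) = P.verts (Fin.last t) := by
  refine ⟨⟨fun j => if j.val = 0 then x else P.verts ⟨i + j.val, by omega⟩,
    fun j => P.edges ⟨i + j.val, by omega⟩, ?_, ?_, ?_, ?_, ?_⟩, ?_, ?_⟩
  · intro j k h
    dsimp only at h
    split_ifs at h with h1 h2 h2
    · exact Fin.ext (by omega)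
    · exact absurd h (hx2 ⟨i + k.val, by omega⟩ (show i < i + k.val by omega))
    · exact absurd h.symm (hx2 ⟨i + j.val, by omega⟩ (show i < i + j.val by omega))
    · have := P.verts_inj h
      simp only [Fin.mk.injEq] at this
      exact Fin.ext (by omega)
  · intro j k h
    have := P.edges_inj h
    simp only [Fin.mk.injEq] at this
    exact Fin.ext (by omega)
  · intro j; exact P.edges_mem _
  · intro j
    by_cases h : (j.castSucc : Fin (t - i + 1)).val = 0
    · rw [if_pos h]
      have : (⟨i + j.val, by omega⟩ : Fin t) = ⟨i, hi⟩ := by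
        simp only [Fin.castSucc, Fin.castAdd, Fin.castLE] at h
        simp only [Fin.mk.injEq]; omega
      rw [this]; exact hx
    · rw [if_neg h]
      have h2 := P.fst_mem ⟨i + j.val, by omega⟩
      have : (⟨i + (j.castSucc : Fin (t - i + 1)).val, by omega⟩ : Fin (t + 1))
          = (⟨i + j.val, by omega⟩ : Fin t).castSucc := Fin.ext (by simp)
      rw [this]; exact h2
  · intro j
    rw [if_neg (by simp)]
    have h2 := P.snd_mem ⟨i + j.val, by omega⟩
    have : (⟨i + (j.succ : Fin (t - i + 1)).val, by omega⟩ : Fin (t + 1))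
        = (⟨i + j.val, by omega⟩ : Fin t).succ := Fin.ext (by simp; omega)
    rw [this]; exact h2
  · simp
  · have h0 : (Fin.last (t - i)).val ≠ 0 := by simp [Fin.last]; omega
    dsimp only
    rw [if_neg h0]
    congr 1
    exact Fin.ext (by simp [Fin.last]; omega)

lemma prefixRep {V : Type*} {H : Finset (Finset V)} {t : ℕ} (P : BergePath H t)
    (i : ℕ) (hi : i < t) (y : V) (hy : y ∈ P.edges ⟨i, hi⟩)
    (hy2 : ∀ j : Fin (t + 1), j.val ≤ i → y ≠ P.verts j) :
    ∃ Q : BergePath H (i + 1), Q.verts 0 = P.verts 0 ∧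
      Q.verts (Fin.last (i + 1)) = y := by
  refine ⟨⟨fun j => if j.val = i + 1 then y else P.verts ⟨j.val, by omega⟩,
    fun j => P.edges ⟨j.val, by omega⟩, ?_, ?_, ?_, ?_, ?_⟩, ?_, ?_⟩
  · intro j k h
    dsimp only at h
    split_ifs at h with h1 h2 h2
    · exact Fin.ext (by omega)
    · exact absurd h (hy2 ⟨k.val, by omega⟩ (show k.val ≤ i by omega))
    · exact absurd h.symm (hy2 ⟨j.val, by omega⟩ (show j.val ≤ i by omega))
    · have := P.verts_inj h
      simp only [Fin.mk.injEq] at this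
      exact Fin.ext (by omega)
  · intro j k h
    have := P.edges_inj h
    simp only [Fin.mk.injEq] at this
    exact Fin.ext (by omega)
  · intro j; exact P.edges_mem _
  · intro j
    rw [if_neg (by have := j.isLt; simp [Fin.castSucc, Fin.castAdd, Fin.castLE]; omega)]
    have h2 := P.fst_mem ⟨j.val, by omega⟩
    have : (⟨(j.castSucc : Fin (i + 2)).val, by omega⟩ : Fin (t + 1))
        = (⟨j.val, by omega⟩ : Fin t).castSucc := Fin.ext (by simp)
    rw [this]; exact h2
  · intro j
    by_cases h : (j.succ : Fin (i + 2)).val = i + 1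
    · rw [if_pos h]
      have : (⟨j.val, by omega⟩ : Fin t) = ⟨i, hi⟩ := by
        simp only [Fin.val_succ] at h
        simp only [Fin.mk.injEq]; omega
      rw [this]; exact hy
    · rw [if_neg h]
      have h2 := P.snd_mem ⟨j.val, by omega⟩
      have : (⟨(j.succ : Fin (i + 2)).val, by omega⟩ : Fin (t + 1))
          = (⟨j.val, by omega⟩ : Fin t).succ := Fin.ext (by simp)
      rw [this]; exact h2
  · dsimp only
    rw [if_neg (by simp)]
    exact congrArg P.verts (Fin.ext (by simp))
  · dsimp only
    rw [if_pos (by simp [Fin.last])]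

noncomputable def bigW {V : Type*} {a b t : ℕ} (ha : 1 ≤ a) (hb : 1 ≤ b) (_ht : 1 ≤ t)
    (cv1 : Fin a → V) (pv : Fin (t + 1) → V) (cv2 : Fin b → V) (m1 m2 : ℕ) (n : ℕ) : V :=
  if n < a then cv1 ⟨(m1 + 1 + n) % a, Nat.mod_lt _ (by omega)⟩
  else if h2 : n < a + t - 1 then pv ⟨n - a + 1, by omega⟩
  else cv2 ⟨(m2 + 1 + (b - 1 - (n - (a + t - 1)))) % b, Nat.mod_lt _ (by omega)⟩

noncomputable def bigE {V : Type*} {a b t : ℕ} (ha : 1 ≤ a) (hb : 1 ≤ b) (_ht : 1 ≤ t)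
    (ce1 : Fin a → Finset V) (pe : Fin t → Finset V) (ce2 : Fin b → Finset V)
    (m1 m2 : ℕ) (n : ℕ) : Finset V :=
  if n < a - 1 then ce1 ⟨(m1 + 1 + n) % a, Nat.mod_lt _ (by omega)⟩
  else if h2 : n < a - 1 + t then pe ⟨n - (a - 1), by omega⟩
  else ce2 ⟨(m2 + 1 + (b - 2 - (n - (a - 1 + t)))) % b, Nat.mod_lt _ (by omega)⟩

lemma bigW_eq1 {V : Type*} {a b t : ℕ} (ha : 1 ≤ a) (hb : 1 ≤ b) (ht : 1 ≤ t)
    (cv1 : Fin a → V) (pv : Fin (t + 1) → V) (cv2 : Fin b → V) (m1 m2 : ℕ) {n : ℕ}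
    (h : n < a) :
    bigW ha hb ht cv1 pv cv2 m1 m2 n = cv1 ⟨(m1 + 1 + n) % a, Nat.mod_lt _ (by omega)⟩ := by
  unfold bigW; rw [if_pos h]

lemma bigW_eq2 {V : Type*} {a b t : ℕ} (ha : 1 ≤ a) (hb : 1 ≤ b) (ht : 1 ≤ t)
    (cv1 : Fin a → V) (pv : Fin (t + 1) → V) (cv2 : Fin b → V) (m1 m2 : ℕ) {n : ℕ}
    (h1 : a ≤ n) (h2 : n < a + t - 1) :
    bigW ha hb ht cv1 pv cv2 m1 m2 n = pv ⟨n - a + 1, by omega⟩ := by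
  unfold bigW; rw [if_neg (by omega), dif_pos h2]

lemma bigW_eq3 {V : Type*} {a b t : ℕ} (ha : 1 ≤ a) (hb : 1 ≤ b) (ht : 1 ≤ t)
    (cv1 : Fin a → V) (pv : Fin (t + 1) → V) (cv2 : Fin b → V) (m1 m2 : ℕ) {n : ℕ}
    (h : a + t - 1 ≤ n) :
    bigW ha hb ht cv1 pv cv2 m1 m2 n
      = cv2 ⟨(m2 + 1 + (b - 1 - (n - (a + t - 1)))) % b, Nat.mod_lt _ (by omega)⟩ := by
  unfold bigW; rw [if_neg (by omega), dif_neg (by omega)]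

lemma bigE_eq1 {V : Type*} {a b t : ℕ} (ha : 1 ≤ a) (hb : 1 ≤ b) (ht : 1 ≤ t)
    (ce1 : Fin a → Finset V) (pe : Fin t → Finset V) (ce2 : Fin b → Finset V)
    (m1 m2 : ℕ) {n : ℕ} (h : n < a - 1) :
    bigE ha hb ht ce1 pe ce2 m1 m2 n = ce1 ⟨(m1 + 1 + n) % a, Nat.mod_lt _ (by omega)⟩ := by
  unfold bigE; rw [if_pos h]

lemma bigE_eq2 {V : Type*} {a b t : ℕ} (ha : 1 ≤ a) (hb : 1 ≤ b) (ht : 1 ≤ t)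
    (ce1 : Fin a → Finset V) (pe : Fin t → Finset V) (ce2 : Fin b → Finset V)
    (m1 m2 : ℕ) {n : ℕ} (h1 : a - 1 ≤ n) (h2 : n < a - 1 + t) :
    bigE ha hb ht ce1 pe ce2 m1 m2 n = pe ⟨n - (a - 1), by omega⟩ := by
  unfold bigE; rw [if_neg (by omega), dif_pos h2]

lemma bigE_eq3 {V : Type*} {a b t : ℕ} (ha : 1 ≤ a) (hb : 1 ≤ b) (ht : 1 ≤ t)
    (ce1 : Fin a → Finset V) (pe : Fin t → Finset V) (ce2 : Fin b → Finset V)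
    (m1 m2 : ℕ) {n : ℕ} (h : a - 1 + t ≤ n) :
    bigE ha hb ht ce1 pe ce2 m1 m2 n
      = ce2 ⟨(m2 + 1 + (b - 2 - (n - (a - 1 + t)))) % b, Nat.mod_lt _ (by omega)⟩ := by
  unfold bigE; rw [if_neg (by omega), dif_neg (by omega)]

lemma buildPath {V : Type*} (H H' : Finset (Finset V)) (hsub : H' ⊆ H)
    {a b t : ℕ} (ha : 1 ≤ a) (hb : 1 ≤ b) (ht : 1 ≤ t)
    (C1 : BergeCycle H' a) (C2 : BergeCycle H' b) (P : BergePath H t)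
    (m1 : Fin a) (m2 : Fin b)
    (hm1v : C1.verts m1 ∈ P.edges ⟨0, ht⟩)
    (hm1e : ∀ j : Fin a, C1.edges j = P.edges ⟨0, ht⟩ → j = m1)
    (hm2v : C2.verts m2 ∈ P.edges ⟨t - 1, by omega⟩)
    (hm2e : ∀ j : Fin b, C2.edges j = P.edges ⟨t - 1, by omega⟩ → j = m2)
    (hM1 : ∀ i : Fin (t + 1), 1 ≤ i.val → P.verts i ∉ Set.range C1.verts)
    (hM2 : ∀ i : Fin (t + 1), i.val ≤ t - 1 → P.verts i ∉ Set.range C2.verts)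
    (hM3 : ∀ i : Fin t, 1 ≤ i.val → P.edges i ∉ Set.range C1.edges)
    (hM4 : ∀ i : Fin t, i.val + 1 < t → P.edges i ∉ Set.range C2.edges)
    (hvdisj : Disjoint (Set.range C1.verts) (Set.range C2.verts))
    (hedisj : Disjoint (Set.range C1.edges) (Set.range C2.edges)) :
    ∃ Q : BergePath H (a - 1 + t + (b - 1)),
      Set.range C1.verts ∪ Set.range C2.verts ⊆ Set.range Q.verts := by
  set L := a - 1 + t + (b - 1) with hLdef
  set W : ℕ → V := bigW ha hb ht C1.verts P.verts C2.verts m1.val m2.val with hWdef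
  set E : ℕ → Finset V := bigE ha hb ht C1.edges P.edges C2.edges m1.val m2.val with hEdef
  have W1 : ∀ {n : ℕ} (h : n < a),
      W n = C1.verts ⟨(m1.val + 1 + n) % a, Nat.mod_lt _ (by omega)⟩ :=
    fun h => bigW_eq1 ha hb ht _ _ _ _ _ h
  have W2 : ∀ {n : ℕ} (h1 : a ≤ n) (h2 : n < a + t - 1),
      W n = P.verts ⟨n - a + 1, by omega⟩ :=
    fun h1 h2 => bigW_eq2 ha hb ht _ _ _ _ _ h1 h2
  have W3 : ∀ {n : ℕ} (h : a + t - 1 ≤ n),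
      W n = C2.verts ⟨(m2.val + 1 + (b - 1 - (n - (a + t - 1)))) % b, Nat.mod_lt _ (by omega)⟩ :=
    fun h => bigW_eq3 ha hb ht _ _ _ _ _ h
  have E1 : ∀ {n : ℕ} (h : n < a - 1),
      E n = C1.edges ⟨(m1.val + 1 + n) % a, Nat.mod_lt _ (by omega)⟩ :=
    fun h => bigE_eq1 ha hb ht _ _ _ _ _ h
  have E2 : ∀ {n : ℕ} (h1 : a - 1 ≤ n) (h2 : n < a - 1 + t),
      E n = P.edges ⟨n - (a - 1), by omega⟩ :=
    fun h1 h2 => bigE_eq2 ha hb ht _ _ _ _ _ h1 h2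
  have E3 : ∀ {n : ℕ} (h : a - 1 + t ≤ n),
      E n = C2.edges ⟨(m2.val + 1 + (b - 2 - (n - (a - 1 + t)))) % b, Nat.mod_lt _ (by omega)⟩ :=
    fun h => bigE_eq3 ha hb ht _ _ _ _ _ h
  have winj : ∀ p q : ℕ, p ≤ L → q ≤ L → p ≤ q → W p = W q → p = q := by
    intro p q hp hq hpq h
    by_cases hpa : p < a
    · by_cases hqa : q < a
      · rw [W1 hpa, W1 hqa] at h
        have h2 := C1.verts_inj h
        simp only [Fin.mk.injEq] at h2
        exact modShiftInj (m1.val + 1) hpa hqa h2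
      · by_cases hqb : q < a + t - 1
        · rw [W1 hpa, W2 (by omega) hqb] at h
          exact absurd ⟨_, h⟩ (hM1 ⟨q - a + 1, by omega⟩ (show 1 ≤ q - a + 1 by omega))
        · rw [W1 hpa, W3 (by omega)] at h
          exact absurd ⟨_, h.symm⟩ (Set.disjoint_left.1 hvdisj ⟨_, rfl⟩)
    · by_cases hpb : p < a + t - 1
      · by_cases hqb : q < a + t - 1
        · rw [W2 (by omega) hpb, W2 (by omega) hqb] at h
          have h2 := P.verts_inj h
          simp only [Fin.mk.injEq] at h2
          omega
        · rw [W2 (by omega) hpb, W3 (by omega)] at h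
          exact absurd ⟨_, h.symm⟩ (hM2 ⟨p - a + 1, by omega⟩ (show p - a + 1 ≤ t - 1 by omega))
      · rw [W3 (show a + t - 1 ≤ p by omega), W3 (show a + t - 1 ≤ q by omega)] at h
        have h2 := C2.verts_inj h
        simp only [Fin.mk.injEq] at h2
        have h3 := modShiftInj (m2.val + 1) (show b - 1 - (p - (a + t - 1)) < b by omega)
          (show b - 1 - (q - (a + t - 1)) < b by omega) h2
        omega
  have einj : ∀ p q : ℕ, p < L → q < L → p ≤ q → E p = E q → p = q := by
    intro p q hp hq hpq h
    by_cases hpa : p < a - 1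
    · by_cases hqa : q < a - 1
      · rw [E1 hpa, E1 hqa] at h
        have h2 := C1.edges_inj h
        simp only [Fin.mk.injEq] at h2
        exact modShiftInj (m1.val + 1) (by omega) (by omega) h2
      · by_cases hqb : q < a - 1 + t
        · rw [E1 hpa, E2 (by omega) hqb] at h
          by_cases hk : 1 ≤ q - (a - 1)
          · exact absurd ⟨_, h⟩ (hM3 ⟨q - (a - 1), by omega⟩ hk)
          · have hq0 : (⟨q - (a - 1), by omega⟩ : Fin t) = ⟨0, ht⟩ := by
              simp only [Fin.mk.injEq]; omega
            rw [hq0] at h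
            have hmm := hm1e _ h
            have hval : (m1.val + 1 + p) % a = m1.val := congrArg Fin.val hmm
            have hmod : (m1.val + (1 + p)) % a = m1.val % a := by
              rw [← Nat.add_assoc, hval, Nat.mod_eq_of_lt m1.isLt]
            have hdvd := modShiftDvd hmod
            have := Nat.le_of_dvd (by omega) hdvd
            omega
        · rw [E1 hpa, E3 (by omega)] at h
          exact absurd ⟨_, h.symm⟩ (Set.disjoint_left.1 hedisj ⟨_, rfl⟩)
    · by_cases hpb : p < a - 1 + t
      · by_cases hqb : q < a - 1 + t
        · rw [E2 (by omega) hpb, E2 (by omega) hqb] at h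
          have h2 := P.edges_inj h
          simp only [Fin.mk.injEq] at h2
          omega
        · rw [E2 (by omega) hpb, E3 (by omega)] at h
          by_cases hk : p - (a - 1) + 1 < t
          · exact absurd ⟨_, h.symm⟩ (hM4 ⟨p - (a - 1), by omega⟩ hk)
          · have hp0 : (⟨p - (a - 1), by omega⟩ : Fin t) = ⟨t - 1, by omega⟩ := by
              simp only [Fin.mk.injEq]; omega
            rw [hp0] at h
            have hmm := hm2e _ h.symm
            have hval : (m2.val + 1 + (b - 2 - (q - (a - 1 + t)))) % b = m2.val :=
              congrArg Fin.val hmm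
            have hmod : (m2.val + (1 + (b - 2 - (q - (a - 1 + t))))) % b = m2.val % b := by
              rw [← Nat.add_assoc, hval, Nat.mod_eq_of_lt m2.isLt]
            have hdvd := modShiftDvd hmod
            have := Nat.le_of_dvd (by omega) hdvd
            omega
      · rw [E3 (show a - 1 + t ≤ p by omega), E3 (show a - 1 + t ≤ q by omega)] at h
        have h2 := C2.edges_inj h
        simp only [Fin.mk.injEq] at h2
        have h3 := modShiftInj (m2.val + 1) (show b - 2 - (p - (a - 1 + t)) < b by omega)
          (show b - 2 - (q - (a - 1 + t)) < b by omega) h2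
        omega
  have hEmem : ∀ n : ℕ, E n ∈ H := by
    intro n
    by_cases h1 : n < a - 1
    · rw [E1 h1]; exact hsub (C1.edges_mem _)
    · by_cases h2 : n < a - 1 + t
      · rw [E2 (by omega) h2]; exact P.edges_mem _
      · rw [E3 (by omega)]; exact hsub (C2.edges_mem _)
  have hfst : ∀ n : ℕ, n < L → W n ∈ E n := by
    intro n hn
    by_cases h1 : n < a - 1
    · rw [W1 (by omega), E1 h1]; exact C1.fst_mem _
    · by_cases h2 : n < a - 1 + t
      · by_cases h3 : n < a
        · rw [W1 h3, E2 (by omega) h2]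
          convert hm1v using 2
          · exact Fin.ext (show n - (a - 1) = 0 by omega)
          · apply Fin.ext
            show (m1.val + 1 + n) % a = m1.val
            rw [show m1.val + 1 + n = m1.val + a from by omega, Nat.add_mod_right]
            exact Nat.mod_eq_of_lt m1.isLt
        · rw [W2 (by omega) (by omega), E2 (by omega) h2]
          have hf := P.fst_mem ⟨n - (a - 1), by omega⟩
          convert hf using 2
          apply Fin.ext
          show n - a + 1 = n - (a - 1)
          omega
      · rw [W3 (by omega), E3 (by omega)]
        have hs := C2.snd_mem ⟨(m2.val + 1 + (b - 2 - (n - (a - 1 + t)))) % b,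
          Nat.mod_lt _ (by omega)⟩
        convert hs using 2
        apply Fin.ext
        show (m2.val + 1 + (b - 1 - (n - (a + t - 1)))) % b
          = ((m2.val + 1 + (b - 2 - (n - (a - 1 + t)))) % b + 1) % b
        rw [Nat.mod_add_mod]
        congr 1
        omega
  have hsnd : ∀ n : ℕ, n < L → W (n + 1) ∈ E n := by
    intro n hn
    by_cases h1 : n < a - 1
    · rw [W1 (show n + 1 < a by omega), E1 h1]
      have hs := C1.snd_mem ⟨(m1.val + 1 + n) % a, Nat.mod_lt _ (by omega)⟩
      convert hs using 2
      apply Fin.ext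
      show (m1.val + 1 + (n + 1)) % a = ((m1.val + 1 + n) % a + 1) % a
      rw [Nat.mod_add_mod]
      congr 1
    · by_cases h2 : n < a - 1 + t
      · by_cases h3 : n + 1 < a + t - 1
        · rw [W2 (by omega) h3, E2 (by omega) h2]
          have hs := P.snd_mem ⟨n - (a - 1), by omega⟩
          convert hs using 2
          apply Fin.ext
          show n + 1 - a + 1 = n - (a - 1) + 1
          omega
        · rw [W3 (by omega), E2 (by omega) h2]
          have e2 : (⟨n - (a - 1), by omega⟩ : Fin t) = ⟨t - 1, by omega⟩ := by
            simp only [Fin.mk.injEq]; omega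
          rw [e2]
          convert hm2v using 2
          apply Fin.ext
          show (m2.val + 1 + (b - 1 - (n + 1 - (a + t - 1)))) % b = m2.val
          rw [show m2.val + 1 + (b - 1 - (n + 1 - (a + t - 1))) = m2.val + b from by omega,
            Nat.add_mod_right]
          exact Nat.mod_eq_of_lt m2.isLt
      · rw [W3 (by omega), E3 (by omega)]
        have hf := C2.fst_mem ⟨(m2.val + 1 + (b - 2 - (n - (a - 1 + t)))) % b,
          Nat.mod_lt _ (by omega)⟩
        convert hf using 2
        apply Fin.ext
        show (m2.val + 1 + (b - 1 - (n + 1 - (a + t - 1)))) % b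
          = (m2.val + 1 + (b - 2 - (n - (a - 1 + t)))) % b
        congr 1
        omega
  refine ⟨⟨fun i => W i.val, fun i => E i.val, ?_, ?_, ?_, ?_, ?_⟩, ?_⟩
  · intro i j hij
    rcases le_total i.val j.val with hle | hle
    · exact Fin.ext (winj _ _ (Nat.lt_succ_iff.mp i.isLt) (Nat.lt_succ_iff.mp j.isLt) hle hij)
    · exact Fin.ext ((winj _ _ (Nat.lt_succ_iff.mp j.isLt) (Nat.lt_succ_iff.mp i.isLt)
        hle hij.symm).symm)
  · intro i j hij
    rcases le_total i.val j.val with hle | hle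
    · exact Fin.ext (einj _ _ i.isLt j.isLt hle hij)
    · exact Fin.ext ((einj _ _ j.isLt i.isLt hle hij.symm).symm)
  · intro i; exact hEmem i.val
  · intro i; exact hfst i.val i.isLt
  · intro i; exact hsnd i.val i.isLt
  · intro x hx
    rcases hx with h | h
    · obtain ⟨k, rfl⟩ := h
      obtain ⟨i, hi, hmod⟩ := existsShift (show 0 < a by omega) (m1.val + 1) k.val k.isLt
      refine ⟨⟨i, by omega⟩, ?_⟩
      show W i = _
      rw [W1 hi]
      exact congrArg C1.verts (Fin.ext hmod)
    · obtain ⟨k, rfl⟩ := h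
      obtain ⟨i, hi, hmod⟩ := existsShift (show 0 < b by omega) (m2.val + 1) k.val k.isLt
      refine ⟨⟨a + t - 1 + (b - 1 - i), by omega⟩, ?_⟩
      show W (a + t - 1 + (b - 1 - i)) = _
      rw [W3 (by omega)]
      refine congrArg C2.verts (Fin.ext ?_)
      show (m2.val + 1 + (b - 1 - (a + t - 1 + (b - 1 - i) - (a + t - 1)))) % b = k.val
      rw [show b - 1 - (a + t - 1 + (b - 1 - i) - (a + t - 1)) = i from by omega]
      exact hmod

/-- Let `H` be a connected `r`-uniform hypergraph and `H' ⊆ H`. If two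
distinct connected components of `H'` contain Berge-cycles of lengths `a` and `b` (so the
two cycles have disjoint vertex sets and disjoint hyperedge sets), then `H` contains a
Berge-path whose defining vertices include all `a + b` vertices of the two cycles; in
particular a Berge-path of length at least `a + b − 1`. Being in distinct components is
expressed by: no Berge-path of `H'` joins a vertex of one cycle to a vertex of the other. -/
theorem path_through_two_component_cycles
    {V : Type*} [Fintype V] (r : ℕ) (H H' : Finset (Finset V))
    (huni : ∀ e ∈ H, e.card = r) (hconn : HConnected H) (hsub : H' ⊆ H)
    (a b : ℕ) (ha : 1 ≤ a) (hb : 1 ≤ b)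
    (C1 : BergeCycle H' a) (C2 : BergeCycle H' b)
    (hcomp : ∀ u v : V, u ∈ Set.range C1.verts → v ∈ Set.range C2.verts →
      ¬ BergeReachable H' u v)
    (hvdisj : Disjoint (Set.range C1.verts) (Set.range C2.verts))
    (hedisj : Disjoint (Set.range C1.edges) (Set.range C2.edges)) :
    ∃ t, ∃ P : BergePath H t,
      (Set.range C1.verts ∪ Set.range C2.verts) ⊆ Set.range P.verts ∧
      a + b - 1 ≤ t := by
  classical
  have ha0 : 0 < a := ha
  have hb0 : 0 < b := hb
  set Sp : ℕ → Prop := fun s => ∃ P : BergePath H s,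
    P.verts 0 ∈ Set.range C1.verts ∧ P.verts (Fin.last s) ∈ Set.range C2.verts with hSp
  have hex : ∃ s, Sp s := by
    have hne : C1.verts ⟨0, ha0⟩ ≠ C2.verts ⟨0, hb0⟩ := by
      intro h
      exact Set.disjoint_left.1 hvdisj ⟨_, rfl⟩ ⟨_, h.symm⟩
    obtain ⟨s, P0, h0, h1⟩ := hconn _ _ hne
    exact ⟨s, P0, ⟨_, h0.symm⟩, ⟨_, h1.symm⟩⟩
  set t := Nat.find hex with htdef
  obtain ⟨P, hP1, hP2⟩ : Sp t := Nat.find_spec hex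
  have hmin : ∀ s, s < t → ¬ Sp s := fun s hs => Nat.find_min hex hs
  have ht : 1 ≤ t := by
    by_contra h
    have h0 : t = 0 := by omega
    have he : P.verts (Fin.last t) = P.verts 0 := by
      apply congrArg P.verts
      apply Fin.ext
      simp [Fin.last, h0]
    rw [he] at hP2
    exact Set.disjoint_left.1 hvdisj hP1 hP2
  have hM1 : ∀ i : Fin (t + 1), 1 ≤ i.val → P.verts i ∉ Set.range C1.verts := by
    intro i h1 hmem
    by_cases hit : i.val = t
    · have he : P.verts i = P.verts (Fin.last t) := congrArg P.verts (Fin.ext hit)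
      rw [he] at hmem
      exact Set.disjoint_left.1 hvdisj hmem hP2
    · have hilt := i.isLt
      have hi : i.val < t := by omega
      obtain ⟨Q, hQ0, hQl⟩ := suffixRep P i.val hi (P.verts i)
        (by
          have hf := P.fst_mem ⟨i.val, hi⟩
          have e : (⟨i.val, hi⟩ : Fin t).castSucc = i := Fin.ext rfl
          rwa [e] at hf)
        (fun k hk heq => by
          have h2 := P.verts_inj heq
          have h3 := congrArg Fin.val h2
          omega)
      exact hmin (t - i.val) (by omega) ⟨Q, by rw [hQ0]; exact hmem, by rw [hQl]; exact hP2⟩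
  have hM2 : ∀ i : Fin (t + 1), i.val ≤ t - 1 → P.verts i ∉ Set.range C2.verts := by
    intro i h1 hmem
    by_cases hi0 : i.val = 0
    · have he : P.verts i = P.verts 0 := congrArg P.verts (Fin.ext hi0)
      rw [he] at hmem
      exact Set.disjoint_left.1 hvdisj hP1 hmem
    · have hi : i.val - 1 < t := by omega
      obtain ⟨Q, hQ0, hQl⟩ := prefixRep P (i.val - 1) hi (P.verts i)
        (by
          have hs := P.snd_mem ⟨i.val - 1, hi⟩
          have e : (⟨i.val - 1, hi⟩ : Fin t).succ = i := Fin.ext (by simp [Fin.val_succ]; omega)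
          rwa [e] at hs)
        (fun k hk heq => by
          have h2 := P.verts_inj heq
          have h3 := congrArg Fin.val h2
          omega)
      exact hmin (i.val - 1 + 1) (by omega)
        ⟨Q, by rw [hQ0]; exact hP1, by rw [hQl]; exact hmem⟩
  have hM3 : ∀ i : Fin t, 1 ≤ i.val → P.edges i ∉ Set.range C1.edges := by
    intro i h1 hmem
    obtain ⟨j, hj⟩ := hmem
    have hx : C1.verts j ∈ P.edges ⟨i.val, i.isLt⟩ := by
      have hf := C1.fst_mem j
      rw [hj] at hf
      exact hf
    obtain ⟨Q, hQ0, hQl⟩ := suffixRep P i.val i.isLt (C1.verts j) hx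
      (fun k hk heq => hM1 k (by omega) ⟨j, heq⟩)
    exact hmin (t - i.val) (by omega) ⟨Q, by rw [hQ0]; exact ⟨j, rfl⟩, by rw [hQl]; exact hP2⟩
  have hM4 : ∀ i : Fin t, i.val + 1 < t → P.edges i ∉ Set.range C2.edges := by
    intro i h1 hmem
    obtain ⟨j, hj⟩ := hmem
    have hy : C2.verts j ∈ P.edges ⟨i.val, i.isLt⟩ := by
      have hf := C2.fst_mem j
      rw [hj] at hf
      exact hf
    obtain ⟨Q, hQ0, hQl⟩ := prefixRep P i.val i.isLt (C2.verts j) hy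
      (fun k hk heq => hM2 k (by omega) ⟨j, heq⟩)
    exact hmin (i.val + 1) (by omega) ⟨Q, by rw [hQ0]; exact hP1, by rw [hQl]; exact ⟨j, rfl⟩⟩
  obtain ⟨m1, hm1v, hm1e⟩ : ∃ m1 : Fin a, C1.verts m1 ∈ P.edges ⟨0, ht⟩ ∧
      ∀ j : Fin a, C1.edges j = P.edges ⟨0, ht⟩ → j = m1 := by
    by_cases hcase : P.edges ⟨0, ht⟩ ∈ Set.range C1.edges
    · obtain ⟨j, hj⟩ := hcase
      refine ⟨j, ?_, fun j' hj' => C1.edges_inj (hj'.trans hj.symm)⟩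
      have hf := C1.fst_mem j
      rwa [hj] at hf
    · obtain ⟨j, hj⟩ := hP1
      refine ⟨j, ?_, fun j' hj' => absurd ⟨j', hj'⟩ hcase⟩
      rw [hj]
      have hf := P.fst_mem ⟨0, ht⟩
      have e : (⟨0, ht⟩ : Fin t).castSucc = 0 := Fin.ext rfl
      rwa [e] at hf
  obtain ⟨m2, hm2v, hm2e⟩ : ∃ m2 : Fin b, C2.verts m2 ∈ P.edges ⟨t - 1, by omega⟩ ∧
      ∀ j : Fin b, C2.edges j = P.edges ⟨t - 1, by omega⟩ → j = m2 := by
    by_cases hcase : P.edges ⟨t - 1, by omega⟩ ∈ Set.range C2.edges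
    · obtain ⟨j, hj⟩ := hcase
      refine ⟨j, ?_, fun j' hj' => C2.edges_inj (hj'.trans hj.symm)⟩
      have hf := C2.fst_mem j
      rwa [hj] at hf
    · obtain ⟨j, hj⟩ := hP2
      refine ⟨j, ?_, fun j' hj' => absurd ⟨j', hj'⟩ hcase⟩
      rw [hj]
      have hs := P.snd_mem ⟨t - 1, by omega⟩
      have e : (⟨t - 1, by omega⟩ : Fin t).succ = Fin.last t :=
        Fin.ext (by simp [Fin.val_succ, Fin.last]; omega)
      rwa [e] at hs
  obtain ⟨Q, hQ⟩ := buildPath H H' hsub ha hb ht C1 C2 P m1 m2 hm1v hm1e hm2v hm2e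
    hM1 hM2 hM3 hM4 hvdisj hedisj
  exact ⟨a - 1 + t + (b - 1), Q, hQ, by omega⟩
end

section
/- Under the standing assumptions (k ≥ 2r+13 ≥ 18; n > N_{k,r}; H a connected n-vertex r-graph with no Berge-path of length k and with at least C(⌊(k-1)/2⌋, r-1)·(n − ⌊(k-1)/2⌋) + C(⌊(k-1)/2⌋, r) + [k even]·C(⌊(k-1)/2⌋, r-2) hyperedges; H' the sub-hypergraph obtained from H by repeatedly deleting vertices of degree less than C(⌊(k-1)/2⌋, r-1) together with their incident hyperedges), if H' is isomorphic to H_{v(H'), k}, then H = H'; that is, no vertex is deleted in the process, so v(H) = v(H') and H itself is isomorphic to H_{n,k}. -/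
open scoped Classical

lemma restrict_step_bound {V : Type*} (H : Finset (Finset V)) (S : Finset V) (v : V) :
    (restrictTo H S).card ≤ (restrictTo H (S.erase v)).card + hdeg (restrictTo H S) v := by
  have hsub : restrictTo H S ⊆
      restrictTo H (S.erase v) ∪ (restrictTo H S).filter (fun e => v ∈ e) := by
    intro e he
    have he' := he
    rw [restrictTo, Finset.mem_filter] at he'
    by_cases hv : v ∈ e
    · exact Finset.mem_union_right _ (Finset.mem_filter.2 ⟨he, hv⟩)
    · refine Finset.mem_union_left _ ?_
      rw [restrictTo, Finset.mem_filter]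
      exact ⟨he'.1, fun x hx => Finset.mem_erase.2 ⟨fun h => hv (h ▸ hx), he'.2 hx⟩⟩
  calc (restrictTo H S).card ≤ _ := Finset.card_le_card hsub
    _ ≤ _ := Finset.card_union_le _ _
    _ = _ := by rw [hdeg]

lemma del_bound {V : Type*} (H : Finset (Finset V)) (D : ℕ) {S T : Finset V}
    (h : DelProcess H D S T) :
    T ⊆ S ∧ (restrictTo H S).card ≤ (restrictTo H T).card + (D - 1) * (S.card - T.card) := by
  induction h with
  | refl S => simp
  | step S T v hv hd h ih =>
    obtain ⟨hTS, hcard⟩ := ih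
    refine ⟨hTS.trans (Finset.erase_subset _ _), ?_⟩
    have h1 := restrict_step_bound H S v
    have h2 : (S.erase v).card = S.card - 1 := Finset.card_erase_of_mem hv
    have h3 : T.card ≤ (S.erase v).card := Finset.card_le_card hTS
    have h4 : 1 ≤ S.card := Finset.card_pos.2 ⟨v, hv⟩
    have h5 : S.card - T.card = ((S.erase v).card - T.card) + 1 := by omega
    have h6 : hdeg (restrictTo H S) v ≤ D - 1 := by omega
    calc (restrictTo H S).card
        ≤ (restrictTo H (S.erase v)).card + hdeg (restrictTo H S) v := h1
      _ ≤ ((restrictTo H T).card + (D - 1) * ((S.erase v).card - T.card)) + (D - 1) := by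
          omega
      _ = (restrictTo H T).card + (D - 1) * (S.card - T.card) := by
          rw [h5, Nat.mul_add, Nat.mul_one, Nat.add_assoc]

lemma inter_union_sdiff_self {V : Type*} (s A : Finset V) :
    (s ∩ A) ∪ (s \ A) = s := by
  ext x
  simp only [Finset.mem_union, Finset.mem_inter, Finset.mem_sdiff]
  tauto

lemma odd_bound {V : Type*} (r : ℕ) (hr : 1 ≤ r) (S A : Finset V)
    (hAS : A ⊆ S) :
    (HnkFamilyOdd r S A).card ≤
      A.card.choose r + (S.card - A.card) * A.card.choose (r - 1) := by
  have hsplit := Finset.card_filter_add_card_filter_not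
    (s := HnkFamilyOdd r S A) (p := fun s => s ⊆ A)
  have hb1 : ((HnkFamilyOdd r S A).filter (fun s => s ⊆ A)).card ≤ A.card.choose r := by
    rw [← Finset.card_powersetCard]
    apply Finset.card_le_card
    intro s hs
    rw [Finset.mem_filter] at hs
    obtain ⟨hs1, hs2⟩ := hs
    rw [HnkFamilyOdd, Finset.mem_filter] at hs1
    exact Finset.mem_powersetCard.2 ⟨hs2, hs1.2.1⟩
  have hb2 : ((HnkFamilyOdd r S A).filter (fun s => ¬ s ⊆ A)).card ≤
      (S.card - A.card) * A.card.choose (r - 1) := by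
    have hle : ((HnkFamilyOdd r S A).filter (fun s => ¬ s ⊆ A)).card ≤
        (((S \ A).image fun b => ({b} : Finset V)) ×ˢ A.powersetCard (r - 1)).card := by
      apply Finset.card_le_card_of_injOn (fun s => (s \ A, s ∩ A))
      · intro s hs
        rw [Finset.mem_coe] at hs ⊢
        rw [Finset.mem_filter] at hs
        obtain ⟨hs1, hs2⟩ := hs
        rw [HnkFamilyOdd, Finset.mem_filter, Finset.mem_powerset] at hs1
        obtain ⟨hsS, hcard, hle1⟩ := hs1
        have hne : (s \ A).Nonempty := by rwa [Finset.sdiff_nonempty]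
        have h1 : (s \ A).card = 1 := le_antisymm hle1 (Finset.card_pos.2 hne)
        obtain ⟨b, hb⟩ := Finset.card_eq_one.1 h1
        have hbm : b ∈ s \ A := hb ▸ Finset.mem_singleton_self b
        rw [Finset.mem_sdiff] at hbm
        rw [Finset.mem_product]
        dsimp only
        constructor
        · rw [hb]
          exact Finset.mem_image_of_mem _ (Finset.mem_sdiff.2 ⟨hsS hbm.1, hbm.2⟩)
        · rw [Finset.mem_powersetCard]
          refine ⟨Finset.inter_subset_right, ?_⟩
          have := Finset.card_inter_add_card_sdiff s A
          omega
      · intro s1 _ s2 _ heq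
        simp only [Prod.mk.injEq] at heq
        rw [← inter_union_sdiff_self s1 A, ← inter_union_sdiff_self s2 A, heq.1, heq.2]
    calc _ ≤ _ := hle
      _ = (S.card - A.card) * A.card.choose (r - 1) := by
          rw [Finset.card_product, Finset.card_image_of_injective _
            (fun a b h => Finset.singleton_injective h),
            Finset.card_powersetCard, Finset.card_sdiff_of_subset hAS]
  omega

lemma even_bound {V : Type*} (r : ℕ) (hr : 2 ≤ r) (S A : Finset V)
    (hAS : A ⊆ S) (b1 b2 : V) (hb1 : b1 ∈ S \ A) (hb2 : b2 ∈ S \ A) (hne : b1 ≠ b2) :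
    (HnkFamilyEven r S A b1 b2).card ≤
      A.card.choose r + (S.card - A.card) * A.card.choose (r - 1) + A.card.choose (r - 2) := by
  have hsplit := Finset.card_filter_add_card_filter_not
    (s := HnkFamilyEven r S A b1 b2) (p := fun s => (s \ A).card ≤ 1)
  have hb1' : ((HnkFamilyEven r S A b1 b2).filter (fun s => (s \ A).card ≤ 1)).card ≤
      A.card.choose r + (S.card - A.card) * A.card.choose (r - 1) := by
    refine le_trans (Finset.card_le_card ?_) (odd_bound r (by omega) S A hAS)
    intro s hs
    rw [Finset.mem_filter] at hs
    obtain ⟨hs1, hs2⟩ := hs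
    rw [HnkFamilyEven, Finset.mem_filter] at hs1
    rw [HnkFamilyOdd, Finset.mem_filter]
    exact ⟨hs1.1, hs1.2.1, hs2⟩
  have hb2' : ((HnkFamilyEven r S A b1 b2).filter (fun s => ¬ (s \ A).card ≤ 1)).card ≤
      A.card.choose (r - 2) := by
    rw [← Finset.card_powersetCard]
    apply Finset.card_le_card_of_injOn (fun s => s ∩ A)
    · intro s hs
      rw [Finset.mem_coe] at hs ⊢
      dsimp only
      rw [Finset.mem_filter] at hs
      obtain ⟨hs1, hs2⟩ := hs
      rw [HnkFamilyEven, Finset.mem_filter, Finset.mem_powerset] at hs1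
      obtain ⟨hsS, hcard, hor⟩ := hs1
      have hset : s \ A = {b1, b2} := hor.resolve_left hs2
      have hc2 : (s \ A).card = 2 := by rw [hset]; exact Finset.card_pair hne
      rw [Finset.mem_powersetCard]
      refine ⟨Finset.inter_subset_right, ?_⟩
      have := Finset.card_inter_add_card_sdiff s A
      omega
    · intro s1 h1 s2 h2 heq
      rw [Finset.mem_coe, Finset.mem_filter] at h1 h2
      obtain ⟨h1a, h1b⟩ := h1
      obtain ⟨h2a, h2b⟩ := h2
      rw [HnkFamilyEven, Finset.mem_filter] at h1a h2a
      have e1 : s1 \ A = {b1, b2} := h1a.2.2.resolve_left h1b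
      have e2 : s2 \ A = {b1, b2} := h2a.2.2.resolve_left h2b
      have : (s1 ∩ A) ∪ (s1 \ A) = (s2 ∩ A) ∪ (s2 \ A) := by
        rw [e1, e2]
        simp only [heq]
      rwa [inter_union_sdiff_self, inter_union_sdiff_self] at this
  omega

/-- Under the standing assumptions, if `H'` is (isomorphic to)
`H_{v(H'),k}`, then no vertex was deleted: `H = H'`, `v(H) = v(H')`, and `H` itself is
(isomorphic to) `H_{n,k}`. -/
theorem residual_Hnk_implies_whole
    (r k n : ℕ) (hk : 2 * r + 13 ≤ k) (hr : 18 ≤ 2 * r + 13) (hn : Nkr r k < n)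
    (H : Finset (Finset (Fin n))) (huni : ∀ e ∈ H, e.card = r)
    (hconn : HConnected H) (hpath : IsEmpty (BergePath H k))
    (hcard : extremalCount r k n ≤ H.card)
    (S : Finset (Fin n))
    (hS : DelProcess H (((k - 1) / 2).choose (r - 1)) Finset.univ S)
    (hterm : ∀ v ∈ S, ((k - 1) / 2).choose (r - 1) ≤ hdeg (restrictTo H S) v)
    (hiso : IsHnkOn r k S (restrictTo H S)) :
    restrictTo H S = H ∧ S = (Finset.univ : Finset (Fin n)) ∧
      IsHnkOn r k (Finset.univ : Finset (Fin n)) H := by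
  classical
  set a := (k - 1) / 2 with ha
  set D := a.choose (r - 1) with hDdef
  have hr3 : 3 ≤ r := by omega
  have hka : r - 1 ≤ a := by omega
  have hD1 : 1 ≤ D := Nat.choose_pos hka
  obtain ⟨A, hAS, hAcard, hcases⟩ := hiso
  have haS : a ≤ S.card := by
    have := Finset.card_le_card hAS
    omega
  have hScard : S.card ≤ n := by
    have := Finset.card_le_card (Finset.subset_univ S)
    simpa using this
  set E := (if 2 ∣ k then a.choose (r - 2) else 0) with hE
  have hbound : (restrictTo H S).card ≤ a.choose r + (S.card - a) * D + E := by
    rcases hcases with ⟨hodd, hEq⟩ | ⟨heven, b1, hmb1, b2, hmb2, hne, hEq⟩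
    · have hnd : ¬ 2 ∣ k := by
        have := Nat.odd_iff.mp hodd
        omega
      rw [hE, if_neg hnd, hEq]
      have h := odd_bound r (by omega) S A hAS
      rw [hAcard, ← ha, ← hDdef] at h
      omega
    · have hd2 : 2 ∣ k := heven.two_dvd
      rw [hE, if_pos hd2, hEq]
      have h := even_bound r (by omega) S A hAS b1 b2 hmb1 hmb2 hne
      rw [hAcard, ← ha, ← hDdef] at h
      omega
  obtain ⟨hTS, hdel⟩ := del_bound H (a.choose (r - 1)) hS
  have huniv : restrictTo H (Finset.univ : Finset (Fin n)) = H := by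
    apply Finset.ext
    intro e
    simp [restrictTo]
  have hucard : (Finset.univ : Finset (Fin n)).card = n := by simp
  rw [huniv, hucard, ← hDdef] at hdel
  have hcard' : D * (n - a) + a.choose r + E ≤ H.card := by
    rw [extremalCount] at hcard
    rw [hE, hDdef, ha]
    omega
  have hSn : S.card = n := by
    by_contra hcne
    have hu : 0 < n - S.card := by omega
    have key : D * (n - a) ≤ (S.card - a) * D + (D - 1) * (n - S.card) := by
      have := hdel.trans (Nat.add_le_add_right hbound _)
      omega
    have hsplit : n - a = (n - S.card) + (S.card - a) := by omega
    rw [hsplit, Nat.mul_add] at key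
    have key2 : D * (n - S.card) ≤ (D - 1) * (n - S.card) := by
      have hcomm : D * (S.card - a) = (S.card - a) * D := Nat.mul_comm _ _
      omega
    have hDD : D ≤ D - 1 := Nat.le_of_mul_le_mul_right key2 hu
    omega
  have hSu : S = (Finset.univ : Finset (Fin n)) :=
    Finset.eq_univ_of_card S (by simpa using hSn)
  subst hSu
  rw [huniv] at hcases
  exact ⟨huniv, rfl, A, hAS, hAcard, hcases⟩
end

section
/- For all integers n and k with n ≥ k ≥ 1, every simple graph on n vertices containing no path of length k has at most (k−1)n/2 edges. -/
open scoped Classical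

namespace ErdosGallaiAux

variable {V : Type*} [DecidableEq V]

/-- A path of length `l` inside vertex set `s`, given as a function on `ℕ`. -/
def IsFnPath (G : SimpleGraph V) (s : Finset V) (l : ℕ) (f : ℕ → V) : Prop :=
  (∀ i ≤ l, f i ∈ s) ∧ (∀ i ≤ l, ∀ j ≤ l, f i = f j → i = j) ∧
    (∀ i < l, G.Adj (f i) (f (i + 1)))

noncomputable def dS (G : SimpleGraph V) (s : Finset V) (v : V) : ℕ :=
  (s.filter (fun w => G.Adj v w)).card

noncomputable def TS (G : SimpleGraph V) (s : Finset V) : ℕ :=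
  ∑ v ∈ s, dS G s v

lemma IsFnPath.card_le {G : SimpleGraph V} {s : Finset V} {l : ℕ} {f : ℕ → V}
    (h : IsFnPath G s l f) : l + 1 ≤ s.card := by
  have hsub : (Finset.range (l + 1)).image f ⊆ s := by
    intro x hx
    simp only [Finset.mem_image, Finset.mem_range] at hx
    obtain ⟨i, hi, rfl⟩ := hx
    exact h.1 i (by omega)
  have hcard : ((Finset.range (l + 1)).image f).card = l + 1 := by
    rw [Finset.card_image_of_injOn, Finset.card_range]
    intro i hi j hj hij
    exact h.2.1 i (by simpa using Nat.lt_succ_iff.mp (Finset.mem_range.mp hi)) j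
      (by simpa using Nat.lt_succ_iff.mp (Finset.mem_range.mp hj)) hij
  calc l + 1 = ((Finset.range (l + 1)).image f).card := hcard.symm
    _ ≤ s.card := Finset.card_le_card hsub

lemma exists_walk (G : SimpleGraph V) (f : ℕ → V) :
    ∀ l, (∀ i < l, G.Adj (f i) (f (i + 1))) →
      ∃ p : G.Walk (f 0) (f l), p.length = l ∧ p.support = (List.range (l + 1)).map f := by
  intro l
  induction l with
  | zero => exact fun _ => ⟨SimpleGraph.Walk.nil, rfl, by simp [List.range_succ]⟩
  | succ l ih =>
    intro h
    obtain ⟨p, hl, hs⟩ := ih (fun i hi => h i (by omega))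
    refine ⟨p.concat (h l (by omega)), ?_, ?_⟩
    · simp [SimpleGraph.Walk.length_concat, hl]
    · rw [SimpleGraph.Walk.support_concat, hs]
      rw [List.range_succ (n := l + 1), List.map_append, List.range_succ (n := l), List.map_append]
      simp

lemma no_long_path {G : SimpleGraph V} {k : ℕ}
    (hpath : ¬ ∃ (u v : V) (p : G.Walk u v), p.IsPath ∧ p.length = k)
    {s : Finset V} {l : ℕ} {f : ℕ → V} (hf : IsFnPath G s l f) (hl : k ≤ l) : False := by
  obtain ⟨p, hlen, hsup⟩ := exists_walk G f k (fun i hi => hf.2.2 i (by omega))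
  refine hpath ⟨_, _, p, ?_, hlen⟩
  rw [SimpleGraph.Walk.isPath_def, hsup]
  refine List.Nodup.map_on ?_ List.nodup_range
  intro x hx y hy hxy
  rw [List.mem_range] at hx hy
  exact hf.2.1 x (by omega) y (by omega) hxy

lemma dS_le {G : SimpleGraph V} {s : Finset V} {v : V} (hv : v ∈ s) :
    dS G s v ≤ s.card - 1 := by
  have : s.filter (fun w => G.Adj v w) ⊆ s.erase v := by
    intro w hw
    rw [Finset.mem_filter] at hw
    exact Finset.mem_erase.mpr ⟨hw.2.ne', hw.1⟩
  calc dS G s v ≤ (s.erase v).card := Finset.card_le_card this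
    _ = s.card - 1 := Finset.card_erase_of_mem hv

lemma TS_le (G : SimpleGraph V) (s : Finset V) : TS G s ≤ s.card * (s.card - 1) := by
  have := Finset.sum_le_card_nsmul s (fun v => dS G s v) (s.card - 1)
    (fun v hv => dS_le hv)
  simpa [TS, smul_eq_mul] using this

lemma TS_delete (G : SimpleGraph V) {s : Finset V} {v : V} (hv : v ∈ s) :
    TS G s = TS G (s.erase v) + 2 * dS G s v := by
  set t := s.erase v with ht
  have hins : s = insert v t := (Finset.insert_erase hv).symm
  have hvt : v ∉ t := Finset.notMem_erase v s
  have h1 : ∀ u, dS G s u = dS G t u + (if G.Adj u v then 1 else 0) := by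
    intro u
    unfold dS
    conv_lhs => rw [hins]
    rw [Finset.filter_insert]
    split_ifs with h
    · rw [Finset.card_insert_of_notMem (fun hmem => hvt (Finset.filter_subset _ _ hmem))]
    · rw [Nat.add_zero]
  have h2 : dS G s v = dS G t v := by
    rw [h1 v, if_neg (G.irrefl), Nat.add_zero]
  have h3 : dS G s v = (t.filter (fun u => G.Adj u v)).card := by
    have : t.filter (fun u => G.Adj u v) = t.filter (fun u => G.Adj v u) := by
      apply Finset.filter_congr
      intro u _
      simp [G.adj_comm]
    rw [this, h2]
    rfl
  calc TS G s = dS G s v + ∑ u ∈ t, dS G s u := by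
        rw [TS, ← Finset.add_sum_erase s _ hv]
    _ = dS G s v + ∑ u ∈ t, (dS G t u + (if G.Adj u v then 1 else 0)) := by
        rw [Finset.sum_congr rfl (fun u _ => h1 u)]
    _ = dS G s v + (TS G t + (t.filter (fun u => G.Adj u v)).card) := by
        rw [Finset.sum_add_distrib, ← Finset.card_filter]
        rfl
    _ = TS G t + 2 * dS G s v := by rw [← h3]; ring

lemma TS_split (G : SimpleGraph V) {s c : Finset V} (hcs : c ⊆ s)
    (hclosed : ∀ u ∈ c, ∀ w ∈ s, G.Adj u w → w ∈ c) :
    TS G s = TS G c + TS G (s \ c) := by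
  have h1 : ∀ u ∈ c, dS G s u = dS G c u := by
    intro u hu
    unfold dS
    congr 1
    apply Finset.Subset.antisymm
    · intro w hw
      rw [Finset.mem_filter] at hw ⊢
      exact ⟨hclosed u hu w hw.1 hw.2, hw.2⟩
    · exact Finset.filter_subset_filter _ hcs
  have h2 : ∀ u ∈ s \ c, dS G s u = dS G (s \ c) u := by
    intro u hu
    rw [Finset.mem_sdiff] at hu
    unfold dS
    congr 1
    apply Finset.Subset.antisymm
    · intro w hw
      rw [Finset.mem_filter] at hw ⊢
      refine ⟨Finset.mem_sdiff.mpr ⟨hw.1, fun hwc => ?_⟩, hw.2⟩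
      exact hu.2 (hclosed w hwc u hu.1 hw.2.symm)
    · exact Finset.filter_subset_filter _ (Finset.sdiff_subset)
  calc TS G s = ∑ u ∈ s \ c, dS G s u + ∑ u ∈ c, dS G s u := (Finset.sum_sdiff hcs).symm
    _ = TS G (s \ c) + TS G c := by
        rw [Finset.sum_congr rfl h2, Finset.sum_congr rfl h1]
        rfl
    _ = TS G c + TS G (s \ c) := by ring


def tauF (l i a' j : ℕ) : ℕ :=
  if a' + 1 + j ≤ l
    then (if a' + 1 + j ≤ i then a' + 1 + j else l + i + 1 - (a' + 1 + j))
    else (if a' + j - l ≤ i then a' + j - l else l + i + 1 - (a' + j - l))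

lemma tauF_le {l i a' : ℕ} (hil : i < l) (ha' : a' ≤ l) (j : ℕ) (hj : j ≤ l) :
    tauF l i a' j ≤ l := by
  unfold tauF; split_ifs <;> omega

lemma tauF_inj {l i a' : ℕ} (hil : i < l) (ha' : a' ≤ l) {j j' : ℕ}
    (hj : j ≤ l) (hj' : j' ≤ l) (he : tauF l i a' j = tauF l i a' j') : j = j' := by
  unfold tauF at he; split_ifs at he <;> omega

lemma tauF_last {l i a : ℕ} (hil : i < l) (ha : a ≤ l) :
    tauF l i (if a ≤ i then a else l + i + 1 - a) l = a := by
  unfold tauF; split_ifs <;> omega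

set_option maxHeartbeats 4000000 in
lemma tauF_step {l i a' : ℕ} (hil : i < l) (ha' : a' ≤ l) {j : ℕ} (hj : j < l) :
    (tauF l i a' (j + 1) = tauF l i a' j + 1 ∧ tauF l i a' j + 1 ≤ l)
    ∨ (tauF l i a' j = tauF l i a' (j + 1) + 1 ∧ tauF l i a' (j + 1) + 1 ≤ l)
    ∨ (tauF l i a' j = i ∧ tauF l i a' (j + 1) = l)
    ∨ (tauF l i a' j = l ∧ tauF l i a' (j + 1) = i)
    ∨ (tauF l i a' j = 0 ∧ tauF l i a' (j + 1) = i + 1)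
    ∨ (tauF l i a' j = i + 1 ∧ tauF l i a' (j + 1) = 0) := by
  unfold tauF; split_ifs <;> omega


set_option maxHeartbeats 2000000 in
lemma main {G : SimpleGraph V} {k : ℕ}
    (hpath : ∀ s : Finset V, ∀ l, ∀ f, IsFnPath G s l f → l < k)
    (s : Finset V) : TS G s ≤ (k - 1) * s.card := by
  induction s using Finset.strongInductionOn with
  | _ s ih =>
  by_cases hsmall : s.card ≤ k
  · calc TS G s ≤ s.card * (s.card - 1) := TS_le G s
      _ ≤ (k - 1) * s.card := by
          rw [mul_comm]
          exact Nat.mul_le_mul (by omega) le_rfl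
  by_cases hlow : ∃ v ∈ s, 2 * dS G s v + 1 ≤ k
  · obtain ⟨v, hv, hd⟩ := hlow
    have h1 : TS G s = TS G (s.erase v) + 2 * dS G s v := TS_delete G hv
    have h2 := ih (s.erase v) (Finset.erase_ssubset hv)
    have h3 : (s.erase v).card = s.card - 1 := Finset.card_erase_of_mem hv
    have hs1 : 1 ≤ s.card := Finset.card_pos.mpr ⟨v, hv⟩
    have h4 : (k - 1) * (s.card - 1) + (k - 1) = (k - 1) * s.card := by
      have hcc : s.card = (s.card - 1) + 1 := by omega
      conv_rhs => rw [hcc]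
      ring
    calc TS G s = TS G (s.erase v) + 2 * dS G s v := h1
      _ ≤ (k - 1) * (s.card - 1) + (k - 1) := by
          rw [← h3]; exact Nat.add_le_add h2 (by omega)
      _ = (k - 1) * s.card := h4
  push_neg at hlow hsmall
  have hdeg : ∀ v ∈ s, k ≤ 2 * dS G s v := fun v hv => by have := hlow v hv; omega
  obtain ⟨v0, hv0⟩ : ∃ v0, v0 ∈ s := Finset.card_pos.mp (by omega)
  set c : Finset V := s.filter (fun u => ∃ l f, IsFnPath G s l f ∧ f 0 = v0 ∧ f l = u) with hc
  have hcs : c ⊆ s := Finset.filter_subset _ _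
  have hv0c : v0 ∈ c := by
    rw [hc, Finset.mem_filter]
    exact ⟨hv0, 0, fun _ => v0,
      ⟨fun i _ => hv0, fun i hi j hj _ => by omega, fun i hi => absurd hi (by omega)⟩, rfl, rfl⟩
  have hclosed : ∀ u ∈ c, ∀ w ∈ s, G.Adj u w → w ∈ c := by
    intro u hu w hw hadj
    rw [hc, Finset.mem_filter] at hu ⊢
    obtain ⟨hus, l, f, hf, hf0, hfl⟩ := hu
    refine ⟨hw, ?_⟩
    by_cases hmem : ∃ j ≤ l, f j = w
    · obtain ⟨j, hj, hfj⟩ := hmem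
      exact ⟨j, f, ⟨fun i hi => hf.1 i (by omega),
        fun i hi i' hi' => hf.2.1 i (by omega) i' (by omega),
        fun i hi => hf.2.2 i (by omega)⟩, hf0, hfj⟩
    · push_neg at hmem
      refine ⟨l + 1, fun i => if i ≤ l then f i else w, ⟨?_, ?_, ?_⟩, ?_, ?_⟩
      · intro i _
        dsimp only
        split_ifs with h
        · exact hf.1 i h
        · exact hw
      · intro i hi j hj hij
        dsimp only at hij
        split_ifs at hij with h1 h2 h3
        · exact hf.2.1 i h1 j h2 hij
        · exact absurd hij (hmem i h1)
        · exact absurd hij.symm (hmem j h3)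
        · omega
      · intro i hi
        dsimp only
        by_cases h : i + 1 ≤ l
        · rw [if_pos (by omega), if_pos h]
          exact hf.2.2 i (by omega)
        · have hie : i = l := by omega
          subst hie
          rw [if_pos le_rfl, if_neg h, hfl]
          exact hadj
      · dsimp only; rw [if_pos (Nat.zero_le l)]; exact hf0
      · dsimp only; rw [if_neg (by omega)]
  have hsplit := TS_split G hcs hclosed
  by_cases hck : c.card ≤ k
  · have h1 : TS G c ≤ (k - 1) * c.card := by
      calc TS G c ≤ c.card * (c.card - 1) := TS_le G c
        _ ≤ (k - 1) * c.card := by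
            rw [mul_comm]
            exact Nat.mul_le_mul (by omega) le_rfl
    have hss : s \ c ⊂ s := by
      refine Finset.ssubset_iff_of_subset Finset.sdiff_subset |>.mpr ⟨v0, hv0, ?_⟩
      simp only [Finset.mem_sdiff, not_and, not_not]
      exact fun _ => hv0c
    have h2 := ih (s \ c) hss
    have h3 : (s \ c).card + c.card = s.card := Finset.card_sdiff_add_card_eq_card hcs
    calc TS G s = TS G c + TS G (s \ c) := hsplit
      _ ≤ (k - 1) * c.card + (k - 1) * (s \ c).card := Nat.add_le_add h1 h2
      _ = (k - 1) * s.card := by rw [← Nat.mul_add]; congr 1; omega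
  · exfalso
    push_neg at hck
    set P : ℕ → Prop := fun l => ∃ f, IsFnPath G c l f with hP
    have hP0 : P 0 := ⟨fun _ => v0, fun i _ => hv0c, fun i hi j hj _ => by omega,
      fun i hi => absurd hi (by omega)⟩
    have hPbd : ∀ m, P m → m < c.card := by
      rintro m ⟨f, hf⟩
      have := hf.card_le
      omega
    set S : Finset ℕ := (Finset.range c.card).filter P with hS
    have hSne : S.Nonempty := ⟨0, by
      rw [hS, Finset.mem_filter, Finset.mem_range]
      exact ⟨by omega, hP0⟩⟩
    set l := S.max' hSne with hldef
    have hlP : P l := (Finset.mem_filter.mp (S.max'_mem hSne)).2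
    have hlmax : ∀ m, P m → m ≤ l := fun m hm =>
      S.le_max' m (Finset.mem_filter.mpr ⟨Finset.mem_range.mpr (hPbd m hm), hm⟩)
    have hnotP : ¬ P (l + 1) := fun h => by have := hlmax _ h; omega
    obtain ⟨f, hf⟩ := hlP
    have hfs : IsFnPath G s l f := ⟨fun i hi => hcs (hf.1 i hi), hf.2.1, hf.2.2⟩
    have hlk : l < k := hpath s l f hfs
    -- endpoint claims
    have hfront : ∀ w ∈ s, G.Adj (f 0) w → ∃ j, 1 ≤ j ∧ j ≤ l ∧ f j = w := by
      intro w hw hadj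
      by_contra hno
      push_neg at hno
      have hwc : w ∈ c := hclosed (f 0) (hf.1 0 (by omega)) w hw hadj
      have hfresh : ∀ j ≤ l, f j ≠ w := by
        intro j hj he
        rcases Nat.eq_zero_or_pos j with h0 | h0
        · subst h0
          exact G.irrefl (he ▸ hadj)
        · exact hno j h0 hj he
      apply hnotP
      refine ⟨fun i => if i = 0 then w else f (i - 1), ?_, ?_, ?_⟩
      · intro i _
        dsimp only
        split_ifs with h
        · exact hwc
        · exact hf.1 (i - 1) (by omega)
      · intro i hi j hj hij
        dsimp only at hij
        split_ifs at hij with h1 h2 h3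
        · omega
        · exact absurd hij.symm (hfresh (j - 1) (by omega))
        · exact absurd hij (hfresh (i - 1) (by omega))
        · have := hf.2.1 (i - 1) (by omega) (j - 1) (by omega) hij
          omega
      · intro i hi
        dsimp only
        rcases Nat.eq_zero_or_pos i with h0 | h0
        · subst h0
          rw [if_pos rfl, if_neg (by omega)]
          simpa using hadj.symm
        · rw [if_neg (by omega), if_neg (by omega)]
          have h5 : G.Adj (f (i - 1)) (f (i - 1 + 1)) := hf.2.2 (i - 1) (by omega)
          have he : i - 1 + 1 = i := by omega
          have he2 : i + 1 - 1 = i := by omega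
          rw [he] at h5
          rw [he2]
          exact h5
    have hback : ∀ w ∈ s, G.Adj (f l) w → ∃ j, j < l ∧ f j = w := by
      intro w hw hadj
      by_contra hno
      push_neg at hno
      have hwc : w ∈ c := hclosed (f l) (hf.1 l le_rfl) w hw hadj
      have hfresh : ∀ j ≤ l, f j ≠ w := by
        intro j hj he
        rcases eq_or_lt_of_le hj with h0 | h0
        · subst h0
          exact G.irrefl (he ▸ hadj)
        · exact hno j h0 he
      apply hnotP
      refine ⟨fun i => if i ≤ l then f i else w, ?_, ?_, ?_⟩
      · intro i _
        dsimp only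
        split_ifs with h
        · exact hf.1 i h
        · exact hwc
      · intro i hi j hj hij
        dsimp only at hij
        split_ifs at hij with h1 h2 h3
        · exact hf.2.1 i h1 j h2 hij
        · exact absurd hij (hfresh i h1)
        · exact absurd hij.symm (hfresh j h3)
        · omega
      · intro i hi
        dsimp only
        by_cases h : i + 1 ≤ l
        · rw [if_pos (by omega), if_pos h]
          exact hf.2.2 i (by omega)
        · have hie : i = l := by omega
          subst hie
          rw [if_pos le_rfl, if_neg h]
          exact hadj
    -- A and B
    set A : Finset ℕ := (Finset.range l).filter (fun i => G.Adj (f 0) (f (i + 1))) with hA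
    set B : Finset ℕ := (Finset.range l).filter (fun i => G.Adj (f l) (f i)) with hB
    have hAcard : dS G s (f 0) ≤ A.card := by
      apply Finset.card_le_card_of_injOn
        (fun w => if h : ∃ j, 1 ≤ j ∧ j ≤ l ∧ f j = w then h.choose - 1 else 0)
      · intro w hw
        simp only [Finset.mem_coe, Finset.mem_filter] at hw ⊢
        have hex : ∃ j, 1 ≤ j ∧ j ≤ l ∧ f j = w := hfront w hw.1 hw.2
        rw [dif_pos hex]
        obtain ⟨h1, h2, h3⟩ := hex.choose_spec
        rw [hA, Finset.mem_filter, Finset.mem_range]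
        refine ⟨by omega, ?_⟩
        rw [show hex.choose - 1 + 1 = hex.choose by omega, h3]
        exact hw.2
      · intro w hw w' hw' he
        rw [Finset.mem_coe, Finset.mem_filter] at hw hw'
        have hex : ∃ j, 1 ≤ j ∧ j ≤ l ∧ f j = w := hfront w hw.1 hw.2
        have hex' : ∃ j, 1 ≤ j ∧ j ≤ l ∧ f j = w' := hfront w' hw'.1 hw'.2
        dsimp only at he
        rw [dif_pos hex, dif_pos hex'] at he
        obtain ⟨h1, h2, h3⟩ := hex.choose_spec
        obtain ⟨h1', h2', h3'⟩ := hex'.choose_spec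
        have : hex.choose = hex'.choose := by omega
        rw [← h3, ← h3', this]
    have hBcard : dS G s (f l) ≤ B.card := by
      apply Finset.card_le_card_of_injOn
        (fun w => if h : ∃ j, j < l ∧ f j = w then h.choose else 0)
      · intro w hw
        simp only [Finset.mem_coe, Finset.mem_filter] at hw ⊢
        have hex : ∃ j, j < l ∧ f j = w := hback w hw.1 hw.2
        rw [dif_pos hex]
        obtain ⟨h1, h2⟩ := hex.choose_spec
        rw [hB, Finset.mem_filter, Finset.mem_range]
        refine ⟨h1, ?_⟩
        rw [h2]
        exact hw.2
      · intro w hw w' hw' he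
        rw [Finset.mem_coe, Finset.mem_filter] at hw hw'
        have hex : ∃ j, j < l ∧ f j = w := hback w hw.1 hw.2
        have hex' : ∃ j, j < l ∧ f j = w' := hback w' hw'.1 hw'.2
        dsimp only at he
        rw [dif_pos hex, dif_pos hex'] at he
        obtain ⟨h1, h2⟩ := hex.choose_spec
        obtain ⟨h1', h2'⟩ := hex'.choose_spec
        rw [← h2, ← h2', he]
    have hd0 := hdeg (f 0) (hcs (hf.1 0 (by omega)))
    have hdl := hdeg (f l) (hcs (hf.1 l le_rfl))
    have hAuB : (A ∪ B).card ≤ l := by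
      have hsub : A ∪ B ⊆ Finset.range l :=
        Finset.union_subset (Finset.filter_subset _ _) (Finset.filter_subset _ _)
      calc (A ∪ B).card ≤ (Finset.range l).card := Finset.card_le_card hsub
        _ = l := Finset.card_range l
    have hiAB : 1 ≤ (A ∩ B).card := by
      have := Finset.card_inter_add_card_union A B
      omega
    obtain ⟨i, hi⟩ := Finset.card_pos.mp (by omega : 0 < (A ∩ B).card)
    rw [Finset.mem_inter] at hi
    have hiA := hi.1
    have hiB := hi.2
    rw [hA, Finset.mem_filter, Finset.mem_range] at hiA
    rw [hB, Finset.mem_filter, Finset.mem_range] at hiB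
    obtain ⟨hil, hadjA⟩ := hiA
    obtain ⟨-, hadjB⟩ := hiB
    -- a fresh vertex exists in c
    have hfree : ∃ y ∈ c, ∀ j ≤ l, f j ≠ y := by
      have himg : (Finset.range (l + 1)).image f ⊆ c := by
        intro x hx
        simp only [Finset.mem_image, Finset.mem_range] at hx
        obtain ⟨j, hj, rfl⟩ := hx
        exact hf.1 j (by omega)
      have hicard : ((Finset.range (l + 1)).image f).card = l + 1 := by
        rw [Finset.card_image_of_injOn, Finset.card_range]
        intro a ha b hb hab
        rw [Finset.mem_coe, Finset.mem_range] at ha hb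
        exact hf.2.1 a (by omega) b (by omega) hab
      have hnsub : ¬ c ⊆ (Finset.range (l + 1)).image f := by
        intro hsub
        have := Finset.card_le_card hsub
        omega
      obtain ⟨y, hyc, hyn⟩ := Finset.not_subset.mp hnsub
      exact ⟨y, hyc, fun j hj he =>
        hyn (Finset.mem_image.mpr ⟨j, Finset.mem_range.mpr (by omega), he⟩)⟩
    obtain ⟨y, hyc, hyf⟩ := hfree
    -- an edge from the path to a fresh vertex of c
    have hedge : ∃ a ≤ l, ∃ w ∈ c, (∀ j ≤ l, f j ≠ w) ∧ G.Adj (f a) w := by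
      obtain ⟨hys, m, h, hh, hh0, hhm⟩ := Finset.mem_filter.mp hyc
      obtain ⟨hf0s, m2, g, hg, hg0, hgm⟩ := Finset.mem_filter.mp (hf.1 0 (by omega))
      by_cases hcase : ∃ j, j ≤ m ∧ ∃ a ≤ l, f a = h j
      · set T : Finset ℕ := (Finset.range (m + 1)).filter (fun j => ∃ a ≤ l, f a = h j)
          with hT
        have hTne : T.Nonempty := by
          obtain ⟨j, hj, hin⟩ := hcase
          exact ⟨j, Finset.mem_filter.mpr ⟨Finset.mem_range.mpr (by omega), hin⟩⟩
        obtain ⟨j, hjT, hjmax⟩ : ∃ j ∈ T, ∀ j' ∈ T, j' ≤ j :=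
          ⟨T.max' hTne, T.max'_mem hTne, fun j' hj' => T.le_max' j' hj'⟩
        rw [hT, Finset.mem_filter, Finset.mem_range] at hjT
        obtain ⟨hjm, a, hal, hfa⟩ := hjT
        have hjne : j ≠ m := by
          intro he
          rw [he, hhm] at hfa
          exact hyf a hal hfa
        have hnext : ¬ ∃ a ≤ l, f a = h (j + 1) := by
          intro hin
          have : j + 1 ∈ T :=
            Finset.mem_filter.mpr ⟨Finset.mem_range.mpr (by omega), hin⟩
          have := hjmax _ this
          omega
        have hjc : h (j + 1) ∈ c := by
          rw [hc, Finset.mem_filter]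
          exact ⟨hh.1 (j + 1) (by omega), j + 1, h,
            ⟨fun i' hi' => hh.1 i' (by omega),
             fun i' hi' j' hj' => hh.2.1 i' (by omega) j' (by omega),
             fun i' hi' => hh.2.2 i' (by omega)⟩, hh0, rfl⟩
        refine ⟨a, hal, h (j + 1), hjc, fun j' hj' he => hnext ⟨j', hj', he⟩, ?_⟩
        rw [hfa]
        exact hh.2.2 j (by omega)
      · push_neg at hcase
        set T : Finset ℕ := (Finset.range (m2 + 1)).filter (fun j => ∃ a ≤ l, f a = g j)
          with hT
        have hTne : T.Nonempty := by
          refine ⟨m2, Finset.mem_filter.mpr ⟨Finset.mem_range.mpr (by omega), 0, by omega, ?_⟩⟩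
          rw [hgm]
        obtain ⟨j, hjT, hjmin⟩ : ∃ j ∈ T, ∀ j' ∈ T, j ≤ j' :=
          ⟨T.min' hTne, T.min'_mem hTne, fun j' hj' => T.min'_le j' hj'⟩
        rw [hT, Finset.mem_filter, Finset.mem_range] at hjT
        obtain ⟨hjm, a, hal, hfa⟩ := hjT
        have hj0 : j ≠ 0 := by
          intro he
          rw [he, hg0, ← hh0] at hfa
          exact hcase 0 (by omega) a hal hfa
        have hprev : ¬ ∃ a ≤ l, f a = g (j - 1) := by
          intro hin
          have : j - 1 ∈ T :=
            Finset.mem_filter.mpr ⟨Finset.mem_range.mpr (by omega), hin⟩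
          have := hjmin _ this
          omega
        have hprevc : g (j - 1) ∈ c := by
          rw [hc, Finset.mem_filter]
          exact ⟨hg.1 (j - 1) (by omega), j - 1, g,
            ⟨fun i' hi' => hg.1 i' (by omega),
             fun i' hi' j' hj' => hg.2.1 i' (by omega) j' (by omega),
             fun i' hi' => hg.2.2 i' (by omega)⟩, hg0, rfl⟩
        refine ⟨a, hal, g (j - 1), hprevc, fun j' hj' he => hprev ⟨j', hj', he⟩, ?_⟩
        rw [hfa]
        have h5 : G.Adj (g (j - 1)) (g (j - 1 + 1)) := hg.2.2 (j - 1) (by omega)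
        rw [show j - 1 + 1 = j from by omega] at h5
        exact h5.symm
    obtain ⟨a, hal, w, hwc, hwfresh, hwadj⟩ := hedge
    -- the rotation
    set a' : ℕ := if a ≤ i then a else l + i + 1 - a with ha'
    have ha'l : a' ≤ l := by rw [ha']; split_ifs <;> omega
    set τ : ℕ → ℕ := tauF l i a' with hτ
    have hτle : ∀ j, j ≤ l → τ j ≤ l := fun j hj => tauF_le hil ha'l j hj
    have hτinj : ∀ j ≤ l, ∀ j' ≤ l, τ j = τ j' → j = j' :=
      fun j hj j' hj' he => tauF_inj hil ha'l hj hj' he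
    have hτl : τ l = a := by rw [hτ, ha']; exact tauF_last hil hal
    have hstep : ∀ j < l,
        (τ (j + 1) = τ j + 1 ∧ τ j + 1 ≤ l) ∨ (τ j = τ (j + 1) + 1 ∧ τ (j + 1) + 1 ≤ l)
          ∨ (τ j = i ∧ τ (j + 1) = l) ∨ (τ j = l ∧ τ (j + 1) = i)
          ∨ (τ j = 0 ∧ τ (j + 1) = i + 1) ∨ (τ j = i + 1 ∧ τ (j + 1) = 0) :=
      fun j hj => tauF_step hil ha'l hj
    apply hnotP
    refine ⟨fun j => if j ≤ l then f (τ j) else w, ?_, ?_, ?_⟩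
    · intro j _
      dsimp only
      split_ifs with h
      · exact hf.1 (τ j) (hτle j h)
      · exact hwc
    · intro j hj j' hj' he
      dsimp only at he
      split_ifs at he with h1 h2 h3
      · exact hτinj j h1 j' h2 (hf.2.1 (τ j) (hτle j h1) (τ j') (hτle j' h2) he)
      · exact absurd he (hwfresh (τ j) (hτle j h1))
      · exact absurd he.symm (hwfresh (τ j') (hτle j' h3))
      · omega
    · intro j hj
      dsimp only
      by_cases h : j < l
      · rw [if_pos (by omega : j ≤ l), if_pos (by omega : j + 1 ≤ l)]
        rcases hstep j h with ⟨h1, h2⟩ | ⟨h1, h2⟩ | ⟨h1, h2⟩ | ⟨h1, h2⟩ | ⟨h1, h2⟩ | ⟨h1, h2⟩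
        · rw [h1]
          exact hf.2.2 (τ j) (by omega)
        · rw [h1]
          exact (hf.2.2 (τ (j + 1)) (by omega)).symm
        · rw [h1, h2]
          exact hadjB.symm
        · rw [h1, h2]
          exact hadjB
        · rw [h1, h2]
          exact hadjA
        · rw [h1, h2]
          exact hadjA.symm
      · have hje : j = l := by omega
        subst hje
        rw [if_pos le_rfl, if_neg (by omega), hτl]
        exact hwadj


end ErdosGallaiAux


/-- Erdős–Gallai. For `n ≥ k ≥ 1`, every simple graph on `n` vertices
with no path of length `k` has at most `(k−1)n/2` edges. -/
theorem erdos_gallai_path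
    (n k : ℕ) (hk : 1 ≤ k) (hkn : k ≤ n) (G : SimpleGraph (Fin n)) [DecidableRel G.Adj]
    (hpath : ¬ ∃ (u v : Fin n) (p : G.Walk u v), p.IsPath ∧ p.length = k) :
    2 * G.edgeFinset.card ≤ (k - 1) * n := by
  classical
  have hpath' : ∀ s : Finset (Fin n), ∀ l, ∀ f, ErdosGallaiAux.IsFnPath G s l f → l < k := by
    intro s l f hf
    by_contra h
    push_neg at h
    exact ErdosGallaiAux.no_long_path hpath hf h
  have hT := ErdosGallaiAux.main hpath' Finset.univ
  have hdeg : ∀ v : Fin n, G.degree v = ErdosGallaiAux.dS G Finset.univ v := by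
    intro v
    unfold ErdosGallaiAux.dS
    rw [← SimpleGraph.card_neighborFinset_eq_degree]
    congr 1
    ext w
    simp [SimpleGraph.mem_neighborFinset]
  have hsum : ∑ v : Fin n, G.degree v = ErdosGallaiAux.TS G Finset.univ := by
    unfold ErdosGallaiAux.TS
    exact Finset.sum_congr rfl (fun v _ => hdeg v)
  calc 2 * G.edgeFinset.card = ∑ v : Fin n, G.degree v :=
        (SimpleGraph.sum_degrees_eq_twice_card_edges G).symm
    _ = ErdosGallaiAux.TS G Finset.univ := hsum
    _ ≤ (k - 1) * (Finset.univ : Finset (Fin n)).card := hT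
    _ = (k - 1) * n := by simp
end
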